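/- arXiv:0902.0216 — 7 statements merged into one kernel-verified Lean document; each statement's English description precedes it below -/
import Mathlib

section
/- Let F be a distribution function, n ≥ 1, and set w_j = [1-F]^{-1}(j/n) for j = 1,…,n. Let F_n(x) = (1/n) Σ_{j=1}^n 1{w_j ≤ x} be the empirical distribution of the weights. Then F_n(x) = ((⌊n F(x)⌋ + 1)/n) ∧ 1 for all x ≥ 0. -/
open MeasureTheory Set Filter

lemma count_lemma (n m : ℕ) (hn : 1 ≤ n) (hm : m ≤ n) :
    ((Finset.Icc 1 n).filter (fun j => n ≤ m + j)).card = min (m + 1) n := by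
  have h : (Finset.Icc 1 n).filter (fun j => n ≤ m + j)
      = Finset.Icc (max 1 (n - m)) n := by
    ext j
    simp only [Finset.mem_filter, Finset.mem_Icc, max_le_iff, le_max_iff]
    omega
  rw [h, Nat.card_Icc]
  omega

/-- explicit formula for the empirical distribution function of the
weights `w_j = [1-F]⁻¹(j/n)`. -/
theorem stmt_1 (F : ℝ → ℝ) (hmono : Monotone F)
    (hrc : ∀ x, ContinuousWithinAt F (Set.Ici x) x)
    (hbot : Tendsto F atBot (nhds 0))
    (htop : Tendsto F atTop (nhds 1))
    (hsupp : ∀ x < (0:ℝ), F x = 0)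
    (n : ℕ) (hn : 1 ≤ n) (w : ℕ → ℝ)
    (hw : ∀ j, 1 ≤ j → j < n → w j = sInf {s : ℝ | 1 - F s ≤ (j:ℝ)/n})
    (hwn : w n = 0) :
    ∀ x : ℝ, 0 ≤ x →
      (1/(n:ℝ)) * ((Finset.Icc 1 n).filter (fun j => w j ≤ x)).card
        = min (((⌊(n:ℝ) * F x⌋ : ℝ) + 1)/(n:ℝ)) 1 := by
  intro x hx
  have hn0 : (0:ℝ) < n := by exact_mod_cast hn
  have hF0 : ∀ y, 0 ≤ F y := by
    intro y
    refine le_of_tendsto hbot ?_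
    filter_upwards [eventually_le_atBot y] with z hz using hmono hz
  have hF1 : ∀ y, F y ≤ 1 := by
    intro y
    refine ge_of_tendsto htop ?_
    filter_upwards [eventually_ge_atTop y] with z hz using hmono hz
  set k : ℤ := ⌊(n:ℝ) * F x⌋ with hk
  have hk0 : 0 ≤ k := Int.le_floor.2 (by
    push_cast
    exact mul_nonneg hn0.le (hF0 x))
  have hkn : k ≤ n := by
    have h1 : (n:ℝ) * F x ≤ n := by nlinarith [hF1 x]
    calc k ≤ ⌊(n:ℝ)⌋ := Int.floor_le_floor h1
      _ = n := Int.floor_natCast n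
  set m : ℕ := k.toNat with hm
  have hmk : (m : ℤ) = k := Int.toNat_of_nonneg hk0
  have hmn : m ≤ n := by omega
  -- key equivalence
  have key : ∀ j ∈ Finset.Icc 1 n, (w j ≤ x ↔ n ≤ m + j) := by
    intro j hj
    simp only [Finset.mem_Icc] at hj
    have hcast : (n ≤ m + j) ↔ ((n:ℝ) - j ≤ (n:ℝ) * F x) := by
      constructor
      · intro h
        have h1 : ((n:ℤ) - j) ≤ k := by omega
        have h2 := Int.le_floor.1 (hk ▸ h1)
        push_cast at h2
        linarith
      · intro h
        have : ((n:ℤ) - j) ≤ k := Int.le_floor.2 (by push_cast; linarith)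
        omega
    rcases eq_or_lt_of_le hj.2 with hjn | hjn
    · constructor
      · intro _; omega
      · intro _; rw [hjn, hwn]; exact hx
    · rw [hcast, hw j hj.1 hjn]
      set S : Set ℝ := {s : ℝ | 1 - F s ≤ (j:ℝ)/n} with hS
      have hjpos : (0:ℝ) < (j:ℝ)/n := by
        apply div_pos _ hn0
        exact_mod_cast hj.1
      have hjlt : (j:ℝ)/n < 1 := by
        rw [div_lt_one hn0]
        exact_mod_cast hjn
      have hSne : S.Nonempty := by
        have : ∀ᶠ s in atTop, 1 - (j:ℝ)/n < F s :=
          htop.eventually (eventually_gt_nhds (by linarith))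
        obtain ⟨s, hs⟩ := this.exists
        exact ⟨s, by simp only [hS, Set.mem_setOf_eq]; linarith⟩
      have hSbdd : BddBelow S := by
        refine ⟨0, fun s hs => ?_⟩
        by_contra hs0
        push_neg at hs0
        have : F s = 0 := hsupp s hs0
        simp only [hS, Set.mem_setOf_eq, this] at hs
        linarith
      constructor
      · intro hle
        have hFx : 1 - (j:ℝ)/n ≤ F x := by
          have htail : Tendsto F (nhdsWithin x (Set.Ioi x)) (nhds (F x)) :=
            (hrc x).mono_left (nhdsWithin_mono x Set.Ioi_subset_Ici_self)
          refine ge_of_tendsto htail ?_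
          filter_upwards [self_mem_nhdsWithin] with t ht
          obtain ⟨s, hsS, hst⟩ := exists_lt_of_csInf_lt hSne (lt_of_le_of_lt hle ht)
          have h1 : 1 - F s ≤ (j:ℝ)/n := hsS
          have h2 := hmono hst.le
          linarith
        have hexp : (n:ℝ)*(1 - (j:ℝ)/n) = n - j := by field_simp
        linarith [mul_le_mul_of_nonneg_left hFx hn0.le]
      · intro h
        apply csInf_le hSbdd
        simp only [hS, Set.mem_setOf_eq]
        rw [sub_le_iff_le_add, ← sub_le_iff_le_add']
        have hexp : (n:ℝ)*(1 - (j:ℝ)/n) = n - j := by field_simp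
        exact le_of_mul_le_mul_left (by linarith) hn0
  rw [Finset.filter_congr key, count_lemma n m hn hmn]
  have hcm : ((min (m+1) n : ℕ) : ℝ) = min ((m:ℝ)+1) (n:ℝ) := by
    push_cast; ring_nf
  rw [hcm]
  have hmr : ((m:ℝ)) = ((k:ℤ):ℝ) := by exact_mod_cast hmk
  rw [one_div, inv_mul_eq_div, ← min_div_div_right hn0.le, div_self hn0.ne', hmr]
end

section
/- Let W have distribution function F on [0,∞) and let W_n have distribution function F_n satisfying F(x) ≤ F_n(x) ≤ F(x) + 1/n for all x, with F_n(w_1) = 1. Let h : [0,∞) → ℂ be differentiable with h(0) = 0 and such that x ↦ |h'(x)|(1-F(x)) is integrable on [0,∞). Then |E[h(W_n)] - E[h(W)]| ≤ ∫_{w_1}^∞ |h'(x)|(1-F(x)) dx + (1/n) ∫_0^{w_1} |h'(x)| dx. -/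
open MeasureTheory Set Filter

lemma null_of_upward (ν : Measure ℝ) (N : Set ℝ) (hN : ∀ x ∈ N, ν (Set.Ici x) = 0) :
    ν N = 0 := by
  by_cases hmin : ∃ m ∈ N, ∀ y ∈ N, m ≤ y
  · obtain ⟨m, hm, hmin⟩ := hmin
    exact measure_mono_null (fun x hx => hmin x hx) (hN m hm)
  · push_neg at hmin
    have hsub : N ⊆ ⋃ q ∈ {q : ℚ | ∃ y ∈ N, y < (q : ℝ)}, Set.Ici (q : ℝ) := by
      intro x hx
      obtain ⟨y, hy, hyx⟩ := hmin x hx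
      obtain ⟨q, hq1, hq2⟩ := exists_rat_btwn hyx
      exact Set.mem_biUnion ⟨y, hy, hq1⟩ (le_of_lt hq2)
    refine measure_mono_null hsub ((measure_biUnion_null_iff (Set.to_countable _)).2 ?_)
    rintro q ⟨y, hy, hyq⟩
    exact measure_mono_null (Set.Ici_subset_Ici.2 hyq.le) (hN y hy)

lemma key_rep (ν : Measure ℝ) [IsProbabilityMeasure ν]
    (hsupp : ν (Set.Iio 0) = 0)
    (h : ℝ → ℂ) (h' : ℝ → ℂ) (hderiv : ∀ x, HasDerivAt h (h' x) x) (h0 : h 0 = 0)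
    (hg : IntegrableOn (fun t => ‖h' t‖ * (ν (Set.Ioi t)).toReal) (Set.Ioi 0)) :
    ∫ x, h x ∂ν = ∫ t in Set.Ioi 0, (ν (Set.Ioi t)).toReal • h' t := by
  have hm : Measurable h' := by
    have hd : deriv h = h' := funext fun x => (hderiv x).deriv
    rw [← hd]; exact measurable_deriv h
  -- a.e. FTC
  have hae : ∀ᵐ x ∂ν, h x = ∫ t in Set.Ioo 0 x, h' t := by
    have h1 : ∀ᵐ x ∂ν, 0 ≤ x := by
      rw [ae_iff]
      have : {x : ℝ | ¬ 0 ≤ x} = Set.Iio 0 := by ext x; simp [not_le]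
      rw [this]; exact hsupp
    have h2 : ∀ᵐ x ∂ν, ν (Set.Ici x) ≠ 0 := by
      rw [ae_iff]
      have : {x : ℝ | ¬ ν (Set.Ici x) ≠ 0} = {x : ℝ | ν (Set.Ici x) = 0} := by
        ext x; simp
      rw [this]
      exact null_of_upward ν _ fun x hx => hx
    filter_upwards [h1, h2] with x hx0 hxc
    rcases eq_or_lt_of_le hx0 with heq | hx0'
    · rw [← heq, h0, Set.Ioo_self, Measure.restrict_empty, integral_zero_measure]
    · have hcpos : 0 < (ν (Set.Ici x)).toReal :=
        ENNReal.toReal_pos hxc (measure_ne_top ν _)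
      set c := (ν (Set.Ici x)).toReal with hc
      have hii : IntegrableOn h' (Set.Ioo 0 x) := by
        refine Integrable.mono'
          (g := fun t => c⁻¹ * (‖h' t‖ * (ν (Set.Ioi t)).toReal)) ?_
          hm.aestronglyMeasurable ?_
        · exact (hg.mono_set Set.Ioo_subset_Ioi_self).const_mul _
        · refine (ae_restrict_iff' measurableSet_Ioo).2 (Filter.Eventually.of_forall fun t ht => ?_)
          have hle : c ≤ (ν (Set.Ioi t)).toReal :=
            ENNReal.toReal_mono (measure_ne_top ν _)
              (measure_mono fun y hy => lt_of_lt_of_le ht.2 hy)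
          have h1 : ‖h' t‖ * c ≤ ‖h' t‖ * (ν (Set.Ioi t)).toReal :=
            mul_le_mul_of_nonneg_left hle (norm_nonneg _)
          calc ‖h' t‖ = c⁻¹ * (‖h' t‖ * c) := by field_simp
            _ ≤ c⁻¹ * (‖h' t‖ * (ν (Set.Ioi t)).toReal) := by
                exact mul_le_mul_of_nonneg_left h1 (inv_nonneg.2 hcpos.le)
      have hIi : IntervalIntegrable h' volume 0 x :=
        (intervalIntegrable_iff_integrableOn_Ioo_of_le hx0).2 hii
      have hftc := intervalIntegral.integral_eq_sub_of_hasDerivAt (fun t _ => hderiv t) hIi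
      rw [h0, sub_zero] at hftc
      rw [← hftc, intervalIntegral.integral_of_le hx0, MeasureTheory.integral_Ioc_eq_integral_Ioo]
  -- Fubini
  set s : Set (ℝ × ℝ) := {p : ℝ × ℝ | 0 < p.2 ∧ p.2 < p.1} with hs
  have hsm : MeasurableSet s :=
    (measurableSet_lt measurable_const measurable_snd).inter
      (measurableSet_lt measurable_snd measurable_fst)
  set f : ℝ × ℝ → ℂ := s.indicator (fun p => h' p.2) with hfdef
  have hfm : AEStronglyMeasurable f (ν.prod volume) :=
    ((hm.comp measurable_snd).indicator hsm).aestronglyMeasurable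
  have hrep1 : ∀ t : ℝ, 0 < t → ∀ x : ℝ,
      f (x, t) = Set.indicator (Set.Ioi t) (fun _ => h' t) x := by
    intro t ht x
    rw [hfdef]
    by_cases hx : t < x
    · rw [Set.indicator_of_mem (show (x, t) ∈ s from ⟨ht, hx⟩),
        Set.indicator_of_mem (show x ∈ Set.Ioi t from hx)]
    · rw [Set.indicator_of_notMem (show (x, t) ∉ s from fun hc => hx hc.2),
        Set.indicator_of_notMem (show x ∉ Set.Ioi t from hx)]
  have hrep2 : ∀ t : ℝ, ¬ 0 < t → ∀ x : ℝ, f (x, t) = 0 := by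
    intro t ht x
    rw [hfdef]
    exact Set.indicator_of_notMem (fun hc => ht hc.1) _
  have ha : ∀ t : ℝ, Integrable (fun x => f (x, t)) ν := by
    intro t
    by_cases ht : 0 < t
    · simp only [hrep1 t ht]
      exact (integrable_const _).indicator measurableSet_Ioi
    · simp only [hrep2 t ht]
      exact integrable_zero _ _ _
  have hb : (fun t => ∫ x, ‖f (x, t)‖ ∂ν)
      = Set.indicator (Set.Ioi 0) (fun t => ‖h' t‖ * (ν (Set.Ioi t)).toReal) := by
    funext t
    show ∫ x, ‖f (x, t)‖ ∂ν = _
    by_cases ht : 0 < t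
    · have hnorm : ∀ x : ℝ, ‖f (x, t)‖ = Set.indicator (Set.Ioi t) (fun _ => ‖h' t‖) x := by
        intro x
        rw [hrep1 t ht x, norm_indicator_eq_indicator_norm]
      simp only [hnorm]
      rw [integral_indicator_const _ measurableSet_Ioi,
        Set.indicator_of_mem (show t ∈ Set.Ioi 0 from ht)]
      simp [mul_comm, measureReal_def]
    · simp only [hrep2 t ht, norm_zero]
      rw [Set.indicator_of_notMem (show t ∉ Set.Ioi 0 from ht)]
      simp
  have hfint : Integrable f (ν.prod volume) :=
    (MeasureTheory.integrable_prod_iff' hfm).2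
      ⟨Filter.Eventually.of_forall ha, by
        rw [hb]; exact (integrable_indicator_iff measurableSet_Ioi).2 hg⟩
  have hswap := MeasureTheory.integral_integral_swap (f := fun x t => f (x, t))
    (μ := ν) (ν := volume) hfint
  have hL : ∫ x, ∫ t, f (x, t) ∂(volume : Measure ℝ) ∂ν = ∫ x, h x ∂ν := by
    refine integral_congr_ae ?_
    filter_upwards [hae] with x hx
    have hpt : ∀ t : ℝ, f (x, t) = Set.indicator (Set.Ioo 0 x) h' t := by
      intro t
      rw [hfdef]
      by_cases h1 : t ∈ Set.Ioo 0 x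
      · rw [Set.indicator_of_mem (show (x, t) ∈ s from ⟨h1.1, h1.2⟩),
          Set.indicator_of_mem h1]
      · rw [Set.indicator_of_notMem (show (x, t) ∉ s from fun hc => h1 ⟨hc.1, hc.2⟩),
          Set.indicator_of_notMem h1]
    show ∫ t, f (x, t) = h x
    simp only [hpt]
    rw [integral_indicator measurableSet_Ioo]
    exact hx.symm
  have hR : ∫ t, ∫ x, f (x, t) ∂ν ∂(volume : Measure ℝ)
      = ∫ t in Set.Ioi 0, (ν (Set.Ioi t)).toReal • h' t := by
    rw [← integral_indicator measurableSet_Ioi]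
    refine integral_congr_ae (Filter.Eventually.of_forall fun t => ?_)
    show ∫ x, f (x, t) ∂ν = _
    by_cases ht : 0 < t
    · simp only [hrep1 t ht]
      rw [integral_indicator_const _ measurableSet_Ioi,
        Set.indicator_of_mem (show t ∈ Set.Ioi 0 from ht)]
      rfl
    · simp only [hrep2 t ht]
      rw [Set.indicator_of_notMem (show t ∉ Set.Ioi 0 from ht)]
      simp
  rw [← hL, hswap, hR]


/-- comparison of expectations of a differentiable function under two
stochastically ordered distributions `F ≤ F_n ≤ F + 1/n` with `F_n(w₁) = 1`. -/
theorem stmt_3 (μ μn : Measure ℝ) [IsProbabilityMeasure μ] [IsProbabilityMeasure μn]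
    (F Fn : ℝ → ℝ) (n : ℕ) (hn : 1 ≤ n) (w1 : ℝ) (hw1 : 0 ≤ w1)
    (hF : ∀ x, μ (Set.Iic x) = ENNReal.ofReal (F x))
    (hFn : ∀ x, μn (Set.Iic x) = ENNReal.ofReal (Fn x))
    (hsupp : μ (Set.Iio 0) = 0) (hsuppn : μn (Set.Iio 0) = 0)
    (hle : ∀ x, F x ≤ Fn x) (hle' : ∀ x, Fn x ≤ F x + 1/n)
    (hFnw1 : Fn w1 = 1)
    (h : ℝ → ℂ) (h' : ℝ → ℂ) (hderiv : ∀ x, HasDerivAt h (h' x) x)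
    (h0 : h 0 = 0)
    (hint : IntegrableOn (fun x => ‖h' x‖ * (1 - F x)) (Set.Ici 0))
    (hint2 : IntegrableOn (fun x => ‖h' x‖) (Set.Icc 0 w1))
    (hinth : Integrable h μ) (hinthn : Integrable h μn) :
    ‖(∫ x, h x ∂μn) - ∫ x, h x ∂μ‖ ≤
      (∫ x in Set.Ici w1, ‖h' x‖ * (1 - F x)) +
        (1/(n:ℝ)) * ∫ x in Set.Icc 0 w1, ‖h' x‖ := by
  have hm : Measurable h' := by
    have hd : deriv h = h' := funext fun x => (hderiv x).deriv
    rw [← hd]; exact measurable_deriv h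
  have hnpos : (0:ℝ) < n := by exact_mod_cast hn
  have hninv : (0:ℝ) ≤ 1 / n := by positivity
  -- CDF facts
  have hF1 : ∀ x, F x ≤ 1 := fun x => by
    have : ENNReal.ofReal (F x) ≤ 1 := by rw [← hF x]; exact prob_le_one
    exact ENNReal.ofReal_le_one.1 this
  have hcompl : ∀ t : ℝ, μ (Set.Ioi t) = 1 - ENNReal.ofReal (F t) := fun t => by
    rw [← Set.compl_Iic, measure_compl measurableSet_Iic (measure_ne_top μ _), measure_univ, hF t]
  have hcompln : ∀ t : ℝ, μn (Set.Ioi t) = 1 - ENNReal.ofReal (Fn t) := fun t => by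
    rw [← Set.compl_Iic, measure_compl measurableSet_Iic (measure_ne_top μn _), measure_univ,
      hFn t]
  have hIoiμ : ∀ t : ℝ, (μ (Set.Ioi t)).toReal = 1 - max (F t) 0 := fun t => by
    rw [hcompl t, ENNReal.toReal_sub_of_le (by rw [← hF t]; exact prob_le_one) ENNReal.one_ne_top,
      ENNReal.toReal_one, ENNReal.toReal_ofReal']
  have hIoiμn : ∀ t : ℝ, (μn (Set.Ioi t)).toReal = 1 - max (Fn t) 0 := fun t => by
    rw [hcompln t,
      ENNReal.toReal_sub_of_le (by rw [← hFn t]; exact prob_le_one) ENNReal.one_ne_top,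
      ENNReal.toReal_one, ENNReal.toReal_ofReal']
  have hμnw1 : μn (Set.Ioi w1) = 0 := by
    rw [hcompln w1, hFnw1]
    simp
  have hμnt : ∀ t : ℝ, w1 ≤ t → μn (Set.Ioi t) = 0 := fun t ht =>
    measure_mono_null (Set.Ioi_subset_Ioi ht) hμnw1
  -- integrability of the representation integrands
  have hgm : Measurable fun t => (μ (Set.Ioi t)).toReal :=
    Antitone.measurable fun a b hab =>
      ENNReal.toReal_mono (measure_ne_top _ _) (measure_mono (Set.Ioi_subset_Ioi hab))
  have hgmn : Measurable fun t => (μn (Set.Ioi t)).toReal :=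
    Antitone.measurable fun a b hab =>
      ENNReal.toReal_mono (measure_ne_top _ _) (measure_mono (Set.Ioi_subset_Ioi hab))
  have hg_μ : IntegrableOn (fun t => ‖h' t‖ * (μ (Set.Ioi t)).toReal) (Set.Ioi 0) := by
    refine Integrable.mono' (hint.mono_set Set.Ioi_subset_Ici_self)
      (hm.norm.mul hgm).aestronglyMeasurable
      (Filter.Eventually.of_forall fun t => ?_)
    rw [Real.norm_of_nonneg (mul_nonneg (norm_nonneg _) ENNReal.toReal_nonneg)]
    refine mul_le_mul_of_nonneg_left ?_ (norm_nonneg _)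
    rw [hIoiμ t]
    have := le_max_left (F t) 0
    linarith
  have hg_μn : IntegrableOn (fun t => ‖h' t‖ * (μn (Set.Ioi t)).toReal) (Set.Ioi 0) := by
    refine Integrable.mono'
      (((integrable_indicator_iff measurableSet_Ioc).2
        (hint2.mono_set Set.Ioc_subset_Icc_self)).integrableOn)
      (hm.norm.mul hgmn).aestronglyMeasurable
      ((ae_restrict_iff' measurableSet_Ioi).2 (Filter.Eventually.of_forall fun t ht0 => ?_))
    rw [Real.norm_of_nonneg (mul_nonneg (norm_nonneg _) ENNReal.toReal_nonneg)]
    by_cases ht : t ≤ w1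
    · rw [Set.indicator_of_mem (show t ∈ Set.Ioc 0 w1 from ⟨ht0, ht⟩)]
      have h1 : (μn (Set.Ioi t)).toReal ≤ 1 :=
        le_trans (ENNReal.toReal_mono ENNReal.one_ne_top prob_le_one) (by simp)
      nlinarith [norm_nonneg (h' t)]
    · rw [Set.indicator_of_notMem (show t ∉ Set.Ioc 0 w1 from fun hc => ht hc.2),
        hμnt t (le_of_not_ge ht)]
      simp
  -- representation
  have hEμ := key_rep μ hsupp h h' hderiv h0 hg_μ
  have hEμn := key_rep μn hsuppn h h' hderiv h0 hg_μn
  have hintμ : Integrable (fun t => (μ (Set.Ioi t)).toReal • h' t)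
      (volume.restrict (Set.Ioi 0)) := by
    refine Integrable.mono' hg_μ (hgm.smul hm).aestronglyMeasurable
      (Filter.Eventually.of_forall fun t => ?_)
    rw [norm_smul, Real.norm_of_nonneg ENNReal.toReal_nonneg, mul_comm]
  have hintμn : Integrable (fun t => (μn (Set.Ioi t)).toReal • h' t)
      (volume.restrict (Set.Ioi 0)) := by
    refine Integrable.mono' hg_μn (hgmn.smul hm).aestronglyMeasurable
      (Filter.Eventually.of_forall fun t => ?_)
    rw [norm_smul, Real.norm_of_nonneg ENNReal.toReal_nonneg, mul_comm]
  have heq : (fun t => ((μn (Set.Ioi t)).toReal - (μ (Set.Ioi t)).toReal) • h' t)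
      = fun t => (μn (Set.Ioi t)).toReal • h' t - (μ (Set.Ioi t)).toReal • h' t :=
    funext fun t => sub_smul _ _ _
  have hdiff : (∫ x, h x ∂μn) - ∫ x, h x ∂μ
      = ∫ t in Set.Ioi 0, ((μn (Set.Ioi t)).toReal - (μ (Set.Ioi t)).toReal) • h' t := by
    rw [hEμn, hEμ, ← integral_sub hintμn hintμ]
    exact integral_congr_ae (Filter.Eventually.of_forall fun t => (congrFun heq t).symm)
  have hdnorm : IntegrableOn
      (fun t => ‖((μn (Set.Ioi t)).toReal - (μ (Set.Ioi t)).toReal) • h' t‖)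
      (Set.Ioi 0) :=
    ((hintμn.sub hintμ).norm).congr
      (Filter.Eventually.of_forall fun t => by simp only [Pi.sub_apply]; rw [← sub_smul])
  have hd1 : IntegrableOn
      (fun t => ‖((μn (Set.Ioi t)).toReal - (μ (Set.Ioi t)).toReal) • h' t‖)
      (Set.Ioc 0 w1) := hdnorm.mono_set Set.Ioc_subset_Ioi_self
  have hd2 : IntegrableOn
      (fun t => ‖((μn (Set.Ioi t)).toReal - (μ (Set.Ioi t)).toReal) • h' t‖)
      (Set.Ioi w1) := hdnorm.mono_set (Set.Ioi_subset_Ioi hw1)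
  have hR1int : IntegrableOn (fun t => (1/(n:ℝ)) * ‖h' t‖) (Set.Ioc 0 w1) :=
    (hint2.mono_set Set.Ioc_subset_Icc_self).const_mul _
  have hR2int : IntegrableOn (fun t => ‖h' t‖ * (1 - F t)) (Set.Ioi w1) :=
    hint.mono_set (fun x hx => le_of_lt (lt_of_le_of_lt hw1 hx))
  rw [hdiff]
  calc ‖∫ t in Set.Ioi 0, ((μn (Set.Ioi t)).toReal - (μ (Set.Ioi t)).toReal) • h' t‖
      ≤ ∫ t in Set.Ioi 0, ‖((μn (Set.Ioi t)).toReal - (μ (Set.Ioi t)).toReal) • h' t‖ :=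
        norm_integral_le_integral_norm _
    _ = (∫ t in Set.Ioc 0 w1, ‖((μn (Set.Ioi t)).toReal - (μ (Set.Ioi t)).toReal) • h' t‖)
        + ∫ t in Set.Ioi w1, ‖((μn (Set.Ioi t)).toReal - (μ (Set.Ioi t)).toReal) • h' t‖ := by
        rw [← Set.Ioc_union_Ioi_eq_Ioi hw1]
        exact setIntegral_union (Set.Ioc_disjoint_Ioi le_rfl) measurableSet_Ioi hd1 hd2
    _ ≤ (∫ t in Set.Ioc 0 w1, (1/(n:ℝ)) * ‖h' t‖)
        + ∫ t in Set.Ioi w1, ‖h' t‖ * (1 - F t) := by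
        refine add_le_add ?_ ?_
        · refine setIntegral_mono_on hd1 hR1int measurableSet_Ioc fun t ht => ?_
          have habs : |(μn (Set.Ioi t)).toReal - (μ (Set.Ioi t)).toReal| ≤ 1/(n:ℝ) := by
            have e1 : (μn (Set.Ioi t)).toReal - (μ (Set.Ioi t)).toReal
                = max (F t) 0 - max (Fn t) 0 := by rw [hIoiμn, hIoiμ]; ring
            have e2 : max (F t) 0 ≤ max (Fn t) 0 := max_le_max (hle t) le_rfl
            have e4 : (0:ℝ) ≤ max (F t) 0 := le_max_right _ _
            have e3 : max (Fn t) 0 ≤ max (F t) 0 + 1/n :=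
              max_le (le_trans (hle' t) (add_le_add_left (le_max_left _ _) _))
                (by linarith)
            rw [e1, abs_le]
            constructor <;> linarith
          calc ‖((μn (Set.Ioi t)).toReal - (μ (Set.Ioi t)).toReal) • h' t‖
              = |(μn (Set.Ioi t)).toReal - (μ (Set.Ioi t)).toReal| * ‖h' t‖ := by
                rw [norm_smul, Real.norm_eq_abs]
            _ ≤ (1/(n:ℝ)) * ‖h' t‖ := mul_le_mul_of_nonneg_right habs (norm_nonneg _)
        · refine setIntegral_mono_on hd2 hR2int measurableSet_Ioi fun t ht => ?_
          have e1 : (μn (Set.Ioi t)).toReal - (μ (Set.Ioi t)).toReal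
              = -((μ (Set.Ioi t)).toReal) := by
            rw [hμnt t (le_of_lt ht)]; simp
          calc ‖((μn (Set.Ioi t)).toReal - (μ (Set.Ioi t)).toReal) • h' t‖
              = |(μn (Set.Ioi t)).toReal - (μ (Set.Ioi t)).toReal| * ‖h' t‖ := by
                rw [norm_smul, Real.norm_eq_abs]
            _ = (μ (Set.Ioi t)).toReal * ‖h' t‖ := by
                rw [e1, abs_neg, abs_of_nonneg ENNReal.toReal_nonneg]
            _ ≤ (1 - F t) * ‖h' t‖ := by
                refine mul_le_mul_of_nonneg_right ?_ (norm_nonneg _)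
                rw [hIoiμ t]
                have := le_max_left (F t) (0:ℝ)
                linarith
            _ = ‖h' t‖ * (1 - F t) := mul_comm _ _
    _ = (∫ x in Set.Ici w1, ‖h' x‖ * (1 - F x))
        + (1/(n:ℝ)) * ∫ x in Set.Icc 0 w1, ‖h' x‖ := by
        rw [MeasureTheory.integral_const_mul, MeasureTheory.integral_Icc_eq_integral_Ioc,
          MeasureTheory.integral_Ici_eq_integral_Ioi]
        exact add_comm _ _
end

section
/- For an inhomogeneous random graph in which each edge ij (1 ≤ i < j ≤ n) is present independently with probability p_{ij}, and for every k ∈ [n], the variance of Z_{≥k} = Σ_{v} 1{|C(v)| ≥ k} satisfies Var(Z_{≥k}) ≤ n · E[|C(V_n)| · 1{|C(V_n)| ≥ k}], where V_n is uniform on [n]. -/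
open MeasureTheory ProbabilityTheory Set Filter
open scoped ENNReal

namespace Stmt8Aux
open scoped Classical

variable {n : ℕ}

/-- The random graph determined by edge-configuration `ω`. -/
def Gr (ω : Sym2 (Fin n) → Bool) : SimpleGraph (Fin n) :=
  SimpleGraph.fromRel (fun a b => ω s(a, b) = true)

/-- Component (as a set) of `v`. -/
def cset (ω : Sym2 (Fin n) → Bool) (v : Fin n) : Set (Fin n) :=
  {u | (Gr ω).Reachable u v}

/-- indicator of `|C(v)| ≥ k`. -/
noncomputable def Xv (k : ℕ) (ω : Sym2 (Fin n) → Bool) (v : Fin n) : ℝ :=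
  if k ≤ (cset ω v).ncard then 1 else 0

/-- product weight -/
noncomputable def μw (a : Sym2 (Fin n) → ℝ) (ω : Sym2 (Fin n) → Bool) : ℝ :=
  ∏ e, (if ω e then a e else 1 - a e)

variable {a : Sym2 (Fin n) → ℝ}

lemma μw_nonneg (ha : ∀ e, 0 ≤ a e ∧ a e ≤ 1) (ω) : 0 ≤ μw a ω := by
  refine Finset.prod_nonneg fun e _ => ?_
  rcases (ha e) with ⟨h0, h1⟩
  split <;> linarith

lemma sum_pi_bool {ι : Type*} [Fintype ι] [DecidableEq ι] (w : ι → Bool → ℝ)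
    (h : ∀ i, w i false + w i true = 1) :
    ∑ x : ι → Bool, ∏ i, w i (x i) = 1 := by
  have h2 := Finset.prod_univ_sum (ι := ι) (κ := fun _ => Bool) (fun _ => (Finset.univ : Finset Bool)) w
  rw [Fintype.piFinset_univ] at h2
  rw [← h2]
  simp only [Fintype.sum_bool]
  rw [Finset.prod_congr rfl fun i _ => ?_, Finset.prod_const_one]
  rw [add_comm]; exact h i

lemma sum_μw (ha : ∀ e, 0 ≤ a e ∧ a e ≤ 1) : ∑ ω, μw a ω = 1 := by
  unfold μw
  exact sum_pi_bool (fun e b => if b then a e else 1 - a e) (fun e => by simp)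


lemma factorization (A : Set (Sym2 (Fin n))) (f g : (Sym2 (Fin n) → Bool) → ℝ)
    (hf : ∀ ω ω', (∀ e ∈ A, ω e = ω' e) → f ω = f ω')
    (hg : ∀ ω ω', (∀ e ∉ A, ω e = ω' e) → g ω = g ω') :
    ∑ ω, μw a ω * (f ω * g ω) = (∑ ω, μw a ω * f ω) * (∑ ω, μw a ω * g ω) := by
  classical
  set p : Sym2 (Fin n) → Prop := fun e => e ∈ A with hp
  set E := Equiv.piEquivPiSubtypeProd p (fun _ : Sym2 (Fin n) => Bool) with hE
  set w : Sym2 (Fin n) → Bool → ℝ := fun e b => if b then a e else 1 - a e with hw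
  have hsymm : ∀ (x : ∀ _ : {e // p e}, Bool) (y : ∀ _ : {e // ¬ p e}, Bool)
      (i : Sym2 (Fin n)) (hi : p i), E.symm (x, y) i = x ⟨i, hi⟩ := by
    intro x y i hi
    simp [hE, Equiv.piEquivPiSubtypeProd_symm_apply, dif_pos hi]
  have hsymm' : ∀ (x : ∀ _ : {e // p e}, Bool) (y : ∀ _ : {e // ¬ p e}, Bool)
      (i : Sym2 (Fin n)) (hi : ¬ p i), E.symm (x, y) i = y ⟨i, hi⟩ := by
    intro x y i hi
    simp [hE, Equiv.piEquivPiSubtypeProd_symm_apply, dif_neg hi]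
  have hμ2 : ∀ x y, μw a (E.symm (x, y))
      = (∏ i, w i.1 (x i)) * (∏ i, w i.1 (y i)) := by
    intro x y
    have := (Fintype.prod_subtype_mul_prod_subtype p
      (fun e => w e (E.symm (x, y) e))).symm
    rw [μw]
    simp only [hw]
    rw [show (∏ e, if E.symm (x,y) e then a e else 1 - a e)
        = (∏ i : {e // p e}, w i.1 (E.symm (x,y) i.1)) * (∏ i : {e // ¬ p e}, w i.1 (E.symm (x,y) i.1)) from this]
    congr 1
    · exact Finset.prod_congr rfl fun i _ => by rw [hsymm x y i.1 i.2]
    · exact Finset.prod_congr rfl fun i _ => by rw [hsymm' x y i.1 i.2]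
  set F : (∀ _ : {e // p e}, Bool) → ℝ := fun x => f (E.symm (x, fun _ => false)) with hF
  set G : (∀ _ : {e // ¬ p e}, Bool) → ℝ := fun y => g (E.symm ((fun _ => false), y)) with hG
  have hfx : ∀ x y, f (E.symm (x, y)) = F x := by
    intro x y
    refine hf _ _ fun e he => ?_
    rw [hsymm x y e he, hsymm x _ e he]
  have hgy : ∀ x y, g (E.symm (x, y)) = G y := by
    intro x y
    refine hg _ _ fun e he => ?_
    rw [hsymm' x y e he, hsymm' _ y e he]
  have key : ∀ H : (Sym2 (Fin n) → Bool) → ℝ,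
      ∑ ω, H ω = ∑ x, ∑ y, H (E.symm (x, y)) := by
    intro H
    rw [← Equiv.sum_comp E.symm H, Fintype.sum_prod_type]
  have hsum1 : ∑ x : ∀ _ : {e // p e}, Bool, ∏ i, w i.1 (x i) = 1 :=
    sum_pi_bool _ (by intro i; simp [hw])
  have hsum2 : ∑ y : ∀ _ : {e // ¬ p e}, Bool, ∏ i, w i.1 (y i) = 1 :=
    sum_pi_bool _ (by intro i; simp [hw])
  have e1 : ∑ ω, μw a ω * (f ω * g ω)
      = (∑ x, (∏ i, w i.1 (x i)) * F x) * (∑ y, (∏ i, w i.1 (y i)) * G y) := by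
    rw [key, Finset.sum_mul_sum]
    refine Finset.sum_congr rfl fun x _ => Finset.sum_congr rfl fun y _ => ?_
    rw [hμ2, hfx x y, hgy x y]; ring
  have e2 : ∑ ω, μw a ω * f ω = ∑ x, (∏ i, w i.1 (x i)) * F x := by
    rw [key]
    have : ∀ x : {e // p e} → Bool, ∑ y : {e // ¬ p e} → Bool, μw a (E.symm (x,y)) * f (E.symm (x,y))
        = ((∏ i, w i.1 (x i)) * F x) * ∑ y' : {e // ¬ p e} → Bool, (∏ i, w i.1 (y' i)) := by
      intro x
      rw [Finset.mul_sum]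
      refine Finset.sum_congr rfl fun y _ => ?_
      rw [hμ2, hfx x y]; ring
    rw [Finset.sum_congr rfl fun x _ => this x]
    simp [hsum2]
  have e3 : ∑ ω, μw a ω * g ω = ∑ y, (∏ i, w i.1 (y i)) * G y := by
    rw [key]
    rw [Finset.sum_comm]
    have : ∀ y : {e // ¬ p e} → Bool, ∑ x : {e // p e} → Bool, μw a (E.symm (x,y)) * g (E.symm (x,y))
        = ((∏ i, w i.1 (y i)) * G y) * ∑ x' : {e // p e} → Bool, (∏ i, w i.1 (x' i)) := by
      intro y
      rw [Finset.mul_sum]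
      refine Finset.sum_congr rfl fun x _ => ?_
      rw [hμ2, hgy x y]; ring
    rw [Finset.sum_congr rfl fun y _ => this y]
    simp [hsum1]
  rw [e1, e2, e3]


lemma Gr_adj (ω : Sym2 (Fin n) → Bool) (x y : Fin n) :
    (Gr ω).Adj x y ↔ x ≠ y ∧ ω s(x, y) = true := by
  unfold Gr
  rw [SimpleGraph.fromRel_adj]
  have : s(y, x) = s(x, y) := Sym2.eq_swap
  rw [this, or_self]

lemma walk_support_subset {G : SimpleGraph (Fin n)} {S : Set (Fin n)}
    (hS : ∀ a b, G.Adj a b → b ∈ S → a ∈ S) {u v : Fin n} (w : G.Walk u v)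
    (hv : v ∈ S) : ∀ x ∈ w.support, x ∈ S := by
  induction w with
  | nil =>
      intro x hx
      rw [SimpleGraph.Walk.support_nil, List.mem_singleton] at hx
      subst hx; exact hv
  | @cons u' v' w' h p ih =>
      intro x hx
      rw [SimpleGraph.Walk.support_cons] at hx
      rcases List.mem_cons.1 hx with h1 | h2
      · subst h1
        exact hS _ _ h (ih hv _ p.start_mem_support)
      · exact ih hv _ h2

lemma reachable_transfer {G G' : SimpleGraph (Fin n)} {u v : Fin n} (w : G.Walk u v)
    (h : ∀ a b, G.Adj a b → a ∈ w.support → b ∈ w.support → G'.Adj a b) :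
    G'.Reachable u v := by
  induction w with
  | nil => exact SimpleGraph.Reachable.refl _
  | @cons u' v' w' had p ih =>
      have h1 : G'.Adj u' v' := by
        refine h _ _ had ?_ ?_
        · rw [SimpleGraph.Walk.support_cons]; exact List.mem_cons_self
        · rw [SimpleGraph.Walk.support_cons]
          exact List.mem_cons_of_mem _ p.start_mem_support
      refine h1.reachable.trans (ih fun a b hab ha hb => ?_)
      refine h _ _ hab ?_ ?_ <;> rw [SimpleGraph.Walk.support_cons]
      · exact List.mem_cons_of_mem _ ha
      · exact List.mem_cons_of_mem _ hb

/-- edges touching `S` -/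
def AS (S : Finset (Fin n)) : Set (Sym2 (Fin n)) := {e | ∃ x ∈ S, x ∈ e}

lemma cset_mem_self (ω : Sym2 (Fin n) → Bool) (v : Fin n) : v ∈ cset ω v :=
  SimpleGraph.Reachable.refl _

lemma cset_closed (ω : Sym2 (Fin n) → Bool) (v : Fin n) :
    ∀ a b : Fin n, (Gr ω).Adj a b → b ∈ cset ω v → a ∈ cset ω v :=
  fun _ _ hab hb => hab.reachable.trans hb

/-- the event `C(i) = S` depends only on edges touching `S`. -/
lemma cset_eq_of_agree {i : Fin n} (S : Finset (Fin n)) (ω ω' : Sym2 (Fin n) → Bool)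
    (hagree : ∀ e ∈ AS S, ω e = ω' e) (h : cset ω i = ↑S) : cset ω' i = ↑S := by
  have hiS : i ∈ (S : Set (Fin n)) := h ▸ cset_mem_self ω i
  apply Set.Subset.antisymm
  · -- cset ω' i ⊆ S
    intro u hu
    obtain ⟨w⟩ := hu
    have hsupp := walk_support_subset (S := (S : Set (Fin n))) ?_ w hiS
    · exact hsupp u w.start_mem_support
    · intro a b hab hb
      have hedge : ω s(a, b) = ω' s(a, b) := hagree _ ⟨b, hb, Sym2.mem_mk_right a b⟩
      have hadj : (Gr ω).Adj a b := by
        rw [Gr_adj] at hab ⊢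
        exact ⟨hab.1, by rw [hedge]; exact hab.2⟩
      have hb' : b ∈ cset ω i := h ▸ hb
      have := cset_closed ω i a b hadj hb'
      exact h ▸ this
  · -- S ⊆ cset ω' i
    intro u hu
    have hu' : u ∈ cset ω i := h ▸ hu
    obtain ⟨w⟩ := hu'
    have hsupp := walk_support_subset (cset_closed ω i) w (cset_mem_self ω i)
    refine reachable_transfer w fun a b hab ha hb => ?_
    have haS : a ∈ (S : Set (Fin n)) := h ▸ hsupp a ha
    have hedge : ω s(a, b) = ω' s(a, b) := hagree _ ⟨a, haS, Sym2.mem_mk_left a b⟩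
    rw [Gr_adj] at hab ⊢
    exact ⟨hab.1, by rw [← hedge]; exact hab.2⟩

/-- graph restricted to vertices outside `S` -/
def Gr' (S : Finset (Fin n)) (ω : Sym2 (Fin n) → Bool) : SimpleGraph (Fin n) :=
  SimpleGraph.fromRel (fun a b => ω s(a, b) = true ∧ a ∉ S ∧ b ∉ S)

def cset' (S : Finset (Fin n)) (ω : Sym2 (Fin n) → Bool) (v : Fin n) : Set (Fin n) :=
  {u | (Gr' S ω).Reachable u v}

lemma Gr'_le (S : Finset (Fin n)) (ω : Sym2 (Fin n) → Bool) : Gr' S ω ≤ Gr ω := by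
  intro x y hxy
  unfold Gr' at hxy
  rw [SimpleGraph.fromRel_adj] at hxy
  rw [Gr_adj]
  refine ⟨hxy.1, ?_⟩
  rcases hxy.2 with h | h
  · exact h.1
  · rw [Sym2.eq_swap]; exact h.1

lemma cset'_subset (S : Finset (Fin n)) (ω : Sym2 (Fin n) → Bool) (v : Fin n) :
    cset' S ω v ⊆ cset ω v :=
  fun _ hu => hu.mono (Gr'_le S ω)

/-- on the event `C(i) = S`, `j ∉ S`, the component of `j` is that of the restricted graph -/
lemma cset'_eq {i j : Fin n} (S : Finset (Fin n)) (ω : Sym2 (Fin n) → Bool)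
    (h : cset ω i = ↑S) (hj : j ∉ S) : cset ω j = cset' S ω j := by
  apply Set.Subset.antisymm
  · intro u hu
    obtain ⟨w⟩ := hu
    have hsupp := walk_support_subset (cset_closed ω j) w (cset_mem_self ω j)
    have hnotS : ∀ x ∈ w.support, x ∉ (S : Set (Fin n)) := by
      intro x hx hxS
      have hxj : x ∈ cset ω j := hsupp x hx
      have hxi : x ∈ cset ω i := h ▸ hxS
      have hji : j ∈ cset ω i := hxj.symm.trans hxi
      rw [h] at hji
      exact hj hji
    refine reachable_transfer w fun a b hab ha hb => ?_
    rw [Gr_adj] at hab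
    unfold Gr'
    rw [SimpleGraph.fromRel_adj]
    exact ⟨hab.1, Or.inl ⟨hab.2, hnotS a ha, hnotS b hb⟩⟩
  · exact cset'_subset S ω j

lemma Gr'_congr (S : Finset (Fin n)) (ω ω' : Sym2 (Fin n) → Bool)
    (hagree : ∀ e ∉ AS S, ω e = ω' e) : Gr' S ω = Gr' S ω' := by
  ext x y
  unfold Gr'
  rw [SimpleGraph.fromRel_adj, SimpleGraph.fromRel_adj]
  have key : ∀ u v : Fin n, u ∉ S → v ∉ S → ω s(u, v) = ω' s(u, v) := by
    intro u v hu hv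
    refine hagree _ fun hmem => ?_
    obtain ⟨x, hxS, hxe⟩ := hmem
    rcases Sym2.mem_iff.1 hxe with rfl | rfl
    · exact hu hxS
    · exact hv hxS
  constructor <;> rintro ⟨hne, h | h⟩ <;> refine ⟨hne, ?_⟩
  · exact Or.inl ⟨by rw [← key x y h.2.1 h.2.2]; exact h.1, h.2⟩
  · exact Or.inr ⟨by rw [← key y x h.2.1 h.2.2]; exact h.1, h.2⟩
  · exact Or.inl ⟨by rw [key x y h.2.1 h.2.2]; exact h.1, h.2⟩
  · exact Or.inr ⟨by rw [key y x h.2.1 h.2.2]; exact h.1, h.2⟩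


variable (a)

lemma EX_nonneg (ha : ∀ e, 0 ≤ a e ∧ a e ≤ 1) (k : ℕ) (v : Fin n) :
    0 ≤ ∑ ω, μw a ω * Xv k ω v := by
  refine Finset.sum_nonneg fun ω _ => mul_nonneg (μw_nonneg ha ω) ?_
  unfold Xv; split <;> norm_num

lemma Xv_le_one (k : ℕ) (ω : Sym2 (Fin n) → Bool) (v : Fin n) : Xv k ω v ≤ 1 := by
  unfold Xv; split <;> norm_num

lemma Xv_nonneg (k : ℕ) (ω : Sym2 (Fin n) → Bool) (v : Fin n) : 0 ≤ Xv k ω v := by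
  unfold Xv; split <;> norm_num

lemma pair (ha : ∀ e, 0 ≤ a e ∧ a e ≤ 1) (k : ℕ) (i j : Fin n) :
    ∑ ω, μw a ω * (Xv k ω i * Xv k ω j)
      ≤ (∑ ω, μw a ω * ((if (Gr ω).Reachable i j then (1:ℝ) else 0) * Xv k ω j))
        + (∑ ω, μw a ω * Xv k ω i) * (∑ ω, μw a ω * Xv k ω j) := by
  classical
  set rI : (Sym2 (Fin n) → Bool) → ℝ := fun ω => if (Gr ω).Reachable i j then 1 else 0 with hrI
  set nI : (Sym2 (Fin n) → Bool) → ℝ := fun ω => if (Gr ω).Reachable i j then 0 else 1 with hnI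
  have split : ∀ ω, μw a ω * (Xv k ω i * Xv k ω j)
      = μw a ω * (rI ω * (Xv k ω i * Xv k ω j)) + μw a ω * (nI ω * (Xv k ω i * Xv k ω j)) := by
    intro ω; simp only [hrI, hnI]; split <;> ring
  rw [Finset.sum_congr rfl fun ω _ => split ω, Finset.sum_add_distrib]
  have step1 : ∑ ω, μw a ω * (rI ω * (Xv k ω i * Xv k ω j))
      ≤ ∑ ω, μw a ω * (rI ω * Xv k ω j) := by
    refine Finset.sum_le_sum fun ω _ => ?_
    refine mul_le_mul_of_nonneg_left ?_ (μw_nonneg ha ω)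
    have h1 : Xv k ω i * Xv k ω j ≤ Xv k ω j :=
      mul_le_of_le_one_left (Xv_nonneg k ω j) (Xv_le_one k ω i)
    simp only [hrI]; split
    · simpa using h1
    · simp
  refine add_le_add step1 ?_
  -- the disjoint part
  set T : Finset (Finset (Fin n)) :=
    Finset.univ.filter (fun S => i ∈ S ∧ j ∉ S ∧ k ≤ S.card) with hT
  have point : ∀ ω, nI ω * (Xv k ω i * Xv k ω j)
      = ∑ S ∈ T, (if cset ω i = ↑S then (1:ℝ) else 0) * Xv k ω j := by
    intro ω
    set S₀ : Finset (Fin n) := (cset ω i).toFinset with hS₀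
    have hcoe : (↑S₀ : Set (Fin n)) = cset ω i := Set.coe_toFinset _
    have hiff : ∀ S : Finset (Fin n), (cset ω i = ↑S) ↔ S = S₀ := by
      intro S
      rw [← hcoe]
      exact ⟨fun hh => (Finset.coe_inj.1 hh.symm), fun hh => by rw [hh]⟩
    have : ∑ S ∈ T, (if cset ω i = ↑S then (1:ℝ) else 0) * Xv k ω j
        = ∑ S ∈ T, (if S = S₀ then (1:ℝ) else 0) * Xv k ω j := by
      refine Finset.sum_congr rfl fun S _ => ?_
      congr 1
      simp only [hiff S]
    rw [this]
    rw [← Finset.sum_mul, Finset.sum_ite_eq' T S₀ (fun _ => (1:ℝ))]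
    have hncard : (cset ω i).ncard = S₀.card := Set.ncard_eq_toFinset_card' _
    by_cases hmem : S₀ ∈ T
    · rw [if_pos hmem, one_mul]
      rw [hT, Finset.mem_filter] at hmem
      obtain ⟨-, hi0, hj0, hk0⟩ := hmem
      have hXi : Xv k ω i = 1 := by
        unfold Xv; rw [if_pos]; rw [hncard]; exact hk0
      have hnR : ¬ (Gr ω).Reachable i j := by
        intro hR
        apply hj0
        have : j ∈ cset ω i := hR.symm
        rw [← hcoe] at this
        exact this
      simp only [hnI, if_neg hnR, hXi]; ring
    · rw [if_neg hmem, zero_mul]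
      rw [hT, Finset.mem_filter] at hmem
      push_neg at hmem
      have hi0 : i ∈ S₀ := by
        rw [← Finset.mem_coe, hcoe]; exact cset_mem_self ω i
      by_cases hj0 : j ∈ S₀
      · have hR : (Gr ω).Reachable i j := by
          have : j ∈ cset ω i := by rw [← hcoe]; exact hj0
          exact this.symm
        simp only [hnI, if_pos hR]; ring
      · have hk0 : ¬ k ≤ S₀.card := not_le.2 (hmem (Finset.mem_univ _) hi0 hj0)
        have hXi : Xv k ω i = 0 := by
          unfold Xv; rw [if_neg]; rw [hncard]; exact hk0
        rw [hXi]; ring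
  rw [Finset.sum_congr rfl fun ω _ => by rw [point ω]]
  rw [Finset.sum_congr rfl fun ω _ => Finset.mul_sum T _ (μw a ω)]
  rw [Finset.sum_comm]
  -- now bound each S ∈ T
  have keyS : ∀ S ∈ T, ∑ ω, μw a ω * ((if cset ω i = ↑S then (1:ℝ) else 0) * Xv k ω j)
      ≤ (∑ ω, μw a ω * (if cset ω i = ↑S then (1:ℝ) else 0)) * (∑ ω, μw a ω * Xv k ω j) := by
    intro S hS
    rw [hT, Finset.mem_filter] at hS
    obtain ⟨-, hiS, hjS, hkS⟩ := hS
    set fS : (Sym2 (Fin n) → Bool) → ℝ := fun ω => if cset ω i = ↑S then 1 else 0 with hfS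
    set YS : (Sym2 (Fin n) → Bool) → ℝ := fun ω => if k ≤ (cset' S ω j).ncard then 1 else 0 with hYS
    have hpoint : ∀ ω, fS ω * Xv k ω j = fS ω * YS ω := by
      intro ω
      by_cases h : cset ω i = ↑S
      · have hcc : cset ω j = cset' S ω j := cset'_eq S ω h hjS
        simp only [hfS, hYS]
        unfold Xv
        rw [hcc]
      · simp only [hfS, if_neg h, zero_mul]
    rw [Finset.sum_congr rfl fun ω _ => by rw [hpoint ω]]
    have hfact := factorization (a := a) (AS S) fS YS ?_ ?_
    · rw [hfact]
      refine mul_le_mul_of_nonneg_left ?_ ?_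
      · -- ∑ μ YS ≤ ∑ μ Xj
        refine Finset.sum_le_sum fun ω _ => ?_
        refine mul_le_mul_of_nonneg_left ?_ (μw_nonneg ha ω)
        simp only [hYS]
        unfold Xv
        have hsub : cset' S ω j ⊆ cset ω j := cset'_subset S ω j
        have hmono : (cset' S ω j).ncard ≤ (cset ω j).ncard :=
          Set.ncard_le_ncard hsub (Set.toFinite _)
        split
        · rw [if_pos (le_trans (by assumption) hmono)]
        · split <;> norm_num
      · refine Finset.sum_nonneg fun ω _ => mul_nonneg (μw_nonneg ha ω) ?_
        simp only [hfS]; split <;> norm_num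
    · -- fS depends only on AS S
      intro ω ω' hagree
      simp only [hfS]
      by_cases h : cset ω i = ↑S
      · rw [if_pos h, if_pos (cset_eq_of_agree S ω ω' hagree h)]
      · rw [if_neg h, if_neg]
        intro h'
        exact h (cset_eq_of_agree S ω' ω (fun e he => (hagree e he).symm) h')
    · -- YS depends only on complement
      intro ω ω' hagree
      simp only [hYS]
      have : Gr' S ω = Gr' S ω' := Gr'_congr S ω ω' hagree
      unfold cset'
      rw [this]
  calc ∑ S ∈ T, ∑ ω, μw a ω * ((if cset ω i = ↑S then (1:ℝ) else 0) * Xv k ω j)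
      ≤ ∑ S ∈ T, (∑ ω, μw a ω * (if cset ω i = ↑S then (1:ℝ) else 0)) * (∑ ω, μw a ω * Xv k ω j) :=
        Finset.sum_le_sum keyS
    _ = (∑ ω, μw a ω * (∑ S ∈ T, if cset ω i = ↑S then (1:ℝ) else 0)) * (∑ ω, μw a ω * Xv k ω j) := by
        rw [← Finset.sum_mul]
        congr 1
        rw [Finset.sum_comm]
        exact Finset.sum_congr rfl fun ω _ => (Finset.mul_sum T _ (μw a ω)).symm
    _ ≤ (∑ ω, μw a ω * Xv k ω i) * (∑ ω, μw a ω * Xv k ω j) := by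
        refine mul_le_mul_of_nonneg_right ?_ (EX_nonneg a ha k j)
        refine Finset.sum_le_sum fun ω _ => ?_
        refine mul_le_mul_of_nonneg_left ?_ (μw_nonneg ha ω)
        -- pointwise: ∑ indicators ≤ Xv
        set S₀ : Finset (Fin n) := (cset ω i).toFinset with hS₀
        have hcoe : (↑S₀ : Set (Fin n)) = cset ω i := Set.coe_toFinset _
        have hiff : ∀ S : Finset (Fin n), (cset ω i = ↑S) ↔ S = S₀ := by
          intro S
          rw [← hcoe]
          exact ⟨fun hh => (Finset.coe_inj.1 hh.symm), fun hh => by rw [hh]⟩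
        have : ∑ S ∈ T, (if cset ω i = ↑S then (1:ℝ) else 0)
            = ∑ S ∈ T, (if S = S₀ then (1:ℝ) else 0) := by
          refine Finset.sum_congr rfl fun S _ => ?_
          congr 1
          simp only [hiff S]
        rw [this, Finset.sum_ite_eq' T S₀ (fun _ => (1:ℝ))]
        have hncard : (cset ω i).ncard = S₀.card := Set.ncard_eq_toFinset_card' _
        by_cases hmem : S₀ ∈ T
        · rw [if_pos hmem]
          rw [hT, Finset.mem_filter] at hmem
          obtain ⟨-, -, -, hk0⟩ := hmem
          unfold Xv
          rw [if_pos]; rw [hncard]; exact hk0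
        · rw [if_neg hmem]; exact Xv_nonneg k ω i


lemma core (ha : ∀ e, 0 ≤ a e ∧ a e ≤ 1) (k : ℕ) :
    (∑ ω, μw a ω * (∑ v, Xv k ω v)^2) - (∑ ω, μw a ω * ∑ v, Xv k ω v)^2
      ≤ ∑ v : Fin n, ∑ ω, μw a ω * (((cset ω v).ncard : ℝ) * Xv k ω v) := by
  classical
  have e1 : ∑ ω, μw a ω * (∑ v, Xv k ω v)^2
      = ∑ i : Fin n, ∑ j : Fin n, ∑ ω, μw a ω * (Xv k ω i * Xv k ω j) := by
    have : ∀ ω : Sym2 (Fin n) → Bool, μw a ω * (∑ v, Xv k ω v)^2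
        = ∑ i : Fin n, ∑ j : Fin n, μw a ω * (Xv k ω i * Xv k ω j) := by
      intro ω
      rw [sq, Finset.sum_mul_sum]
      rw [Finset.mul_sum]
      exact Finset.sum_congr rfl fun i _ => Finset.mul_sum _ _ _
    rw [Finset.sum_congr rfl fun ω _ => this ω]
    rw [Finset.sum_comm]
    exact Finset.sum_congr rfl fun i _ => Finset.sum_comm
  have e2 : (∑ ω, μw a ω * ∑ v, Xv k ω v)^2
      = ∑ i : Fin n, ∑ j : Fin n, (∑ ω, μw a ω * Xv k ω i) * (∑ ω, μw a ω * Xv k ω j) := by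
    have : ∑ ω, μw a ω * ∑ v, Xv k ω v = ∑ v : Fin n, ∑ ω, μw a ω * Xv k ω v := by
      rw [Finset.sum_congr rfl fun ω _ => Finset.mul_sum _ _ (μw a ω), Finset.sum_comm]
    rw [this, sq, Finset.sum_mul_sum]
  rw [e1, e2, ← Finset.sum_sub_distrib]
  rw [Finset.sum_congr rfl fun i _ => (Finset.sum_sub_distrib _ _).symm]
  have hnc : ∀ (ω : Sym2 (Fin n) → Bool) (v : Fin n),
      ((cset ω v).ncard : ℝ) = ∑ u : Fin n, (if (Gr ω).Reachable u v then (1:ℝ) else 0) := by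
    intro ω v
    rw [Finset.sum_boole]
    congr 1
    rw [Set.ncard_eq_toFinset_card']
    congr 1
    rw [show cset ω v = {u | (Gr ω).Reachable u v} from rfl]
    rw [Set.toFinset_setOf]
  have eR : ∑ v : Fin n, ∑ ω, μw a ω * (((cset ω v).ncard : ℝ) * Xv k ω v)
      = ∑ i : Fin n, ∑ j : Fin n, ∑ ω, μw a ω *
          ((if (Gr ω).Reachable i j then (1:ℝ) else 0) * Xv k ω j) := by
    calc ∑ v : Fin n, ∑ ω, μw a ω * (((cset ω v).ncard : ℝ) * Xv k ω v)
        = ∑ v : Fin n, ∑ ω, ∑ i : Fin n, μw a ω *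
            ((if (Gr ω).Reachable i v then (1:ℝ) else 0) * Xv k ω v) := by
          refine Finset.sum_congr rfl fun v _ => Finset.sum_congr rfl fun ω _ => ?_
          rw [hnc ω v, Finset.sum_mul, Finset.mul_sum]
      _ = ∑ v : Fin n, ∑ i : Fin n, ∑ ω, μw a ω *
            ((if (Gr ω).Reachable i v then (1:ℝ) else 0) * Xv k ω v) := by
          exact Finset.sum_congr rfl fun v _ => Finset.sum_comm
      _ = ∑ i : Fin n, ∑ j : Fin n, ∑ ω, μw a ω *
            ((if (Gr ω).Reachable i j then (1:ℝ) else 0) * Xv k ω j) := Finset.sum_comm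
  rw [eR]
  refine Finset.sum_le_sum fun i _ => Finset.sum_le_sum fun j _ => ?_
  rw [sub_le_iff_le_add]
  exact pair a ha k i j

end Stmt8Aux

open Stmt8Aux in
/-- for an inhomogeneous random graph with independent edges
(edge `e` present with probability `p e`), the variance of
`Z_{≥k} = Σ_v 1{|C(v)| ≥ k}` is at most `n·E[|C(V_n)| 1{|C(V_n)| ≥ k}]`. -/
theorem stmt_8 (n : ℕ) (hn : 1 ≤ n)
    (p : Sym2 (Fin n) → ℝ≥0∞) (hp : ∀ e, p e ≤ 1) (k : ℕ)
    (P : Measure (Sym2 (Fin n) → Bool))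
    (hP : P = Measure.pi (fun e => (PMF.bernoulli (p e).toNNReal
        (by simpa using ENNReal.toNNReal_mono ENNReal.one_ne_top (hp e))).toMeasure)) :
    variance (fun ω =>
        ({v : Fin n | k ≤ {u | (SimpleGraph.fromRel
            (fun a b => ω s(a, b) = true)).Reachable u v}.ncard}.ncard : ℝ)) P
      ≤ (n : ℝ) * ((n : ℝ)⁻¹ * ∑ v : Fin n, ∫ ω,
          (({u | (SimpleGraph.fromRel
              (fun a b => ω s(a, b) = true)).Reachable u v}.ncard : ℝ) *
            (if k ≤ {u | (SimpleGraph.fromRel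
              (fun a b => ω s(a, b) = true)).Reachable u v}.ncard then 1 else 0)) ∂P) := by

  classical
  subst hP
  set P : Measure (Sym2 (Fin n) → Bool) :=
    Measure.pi (fun e => (PMF.bernoulli (p e).toNNReal
        (by simpa using ENNReal.toNNReal_mono ENNReal.one_ne_top (hp e))).toMeasure) with hPdef
  haveI : IsProbabilityMeasure P := by rw [hPdef]; infer_instance
  set a : Sym2 (Fin n) → ℝ := fun e => (p e).toReal with ha_def
  have ha : ∀ e, 0 ≤ a e ∧ a e ≤ 1 := by
    intro e
    refine ⟨ENNReal.toReal_nonneg, ?_⟩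
    have := ENNReal.toReal_mono (by simp) (hp e)
    simpa using this
  -- point masses
  have hsingle : ∀ ω, (P {ω}).toReal = μw a ω := by
    intro ω
    have h1 : ({ω} : Set (Sym2 (Fin n) → Bool)) = Set.univ.pi (fun e => {ω e}) :=
      (Set.univ_pi_singleton ω).symm
    rw [h1, hPdef, Measure.pi_pi]
    rw [ENNReal.toReal_prod]
    refine Finset.prod_congr rfl fun e _ => ?_
    rw [PMF.toMeasure_apply_singleton _ _ (measurableSet_singleton _)]
    erw [PMF.bernoulli_apply]
    cases hω : ω e
    · simp only [Bool.cond_false, Bool.false_eq_true, if_false]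
      rw [ENNReal.coe_toReal, NNReal.coe_sub (by simpa using ENNReal.toNNReal_mono ENNReal.one_ne_top (hp e)),
        NNReal.coe_one, ENNReal.coe_toNNReal_eq_toReal]
    · simp only [Bool.cond_true, if_true]
      rw [ENNReal.coe_toReal, ENNReal.coe_toNNReal_eq_toReal]
  -- integrals are weighted sums
  have hint : ∀ f : (Sym2 (Fin n) → Bool) → ℝ, ∫ ω, f ω ∂P = ∑ ω, μw a ω * f ω := by
    intro f
    rw [integral_fintype (Integrable.of_finite)]
    exact Finset.sum_congr rfl fun ω _ => by rw [measureReal_def, hsingle ω, smul_eq_mul]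
  -- Z as sum of indicators
  set Z : (Sym2 (Fin n) → Bool) → ℝ := fun ω =>
    ({v : Fin n | k ≤ {u | (SimpleGraph.fromRel
        (fun a b => ω s(a, b) = true)).Reachable u v}.ncard}.ncard : ℝ) with hZdef
  have hZ : ∀ ω, Z ω = ∑ v, Xv k ω v := by
    intro ω
    have h1 : ∀ v, Xv k ω v = if k ≤ (cset ω v).ncard then (1:ℝ) else 0 := fun v => rfl
    rw [Finset.sum_congr rfl fun v _ => h1 v, Finset.sum_boole]
    have h2 : Z ω = (({v : Fin n | k ≤ (cset ω v).ncard}).ncard : ℝ) := rfl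
    rw [h2, Set.ncard_eq_toFinset_card', Set.toFinset_setOf]
  -- measurability / Memℒp
  have hZmeas : AEStronglyMeasurable Z P :=
    (measurable_of_countable Z).aestronglyMeasurable
  have hZbd : ∀ ω, ‖Z ω‖ ≤ (n : ℝ) := by
    intro ω
    have h2 : Z ω = (({v : Fin n | k ≤ (cset ω v).ncard}).ncard : ℝ) := rfl
    rw [h2, Real.norm_of_nonneg (by positivity)]
    have : ({v : Fin n | k ≤ (cset ω v).ncard}).ncard ≤ n := by
      refine le_trans (Set.ncard_le_ncard (Set.subset_univ _) (Set.toFinite _)) ?_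
      rw [Set.ncard_univ]
      simp
    exact_mod_cast this
  have hZL2 : MemLp Z 2 P :=
    (memLp_top_of_bound hZmeas (n : ℝ) (Filter.Eventually.of_forall hZbd)).mono_exponent le_top
  rw [variance_eq_sub hZL2]
  -- rewrite both integrals
  have hI1 : ∫ ω, (Z ^ 2) ω ∂P = ∑ ω, μw a ω * (∑ v, Xv k ω v)^2 := by
    rw [hint (Z ^ 2)]
    exact Finset.sum_congr rfl fun ω _ => by rw [Pi.pow_apply, hZ ω]
  have hI2 : ∫ ω, Z ω ∂P = ∑ ω, μw a ω * ∑ v, Xv k ω v := by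
    rw [hint Z]
    exact Finset.sum_congr rfl fun ω _ => by rw [hZ ω]
  rw [hI1, hI2]
  -- rewrite RHS
  have hn' : (n : ℝ) ≠ 0 := by positivity
  rw [← mul_assoc, mul_inv_cancel₀ hn', one_mul]
  have hRHS : ∀ v : Fin n, ∫ ω,
      (({u | (SimpleGraph.fromRel
          (fun a b => ω s(a, b) = true)).Reachable u v}.ncard : ℝ) *
        (if k ≤ {u | (SimpleGraph.fromRel
          (fun a b => ω s(a, b) = true)).Reachable u v}.ncard then 1 else 0)) ∂P
      = ∑ ω, μw a ω * (((cset ω v).ncard : ℝ) * Xv k ω v) := by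
    intro v
    rw [hint]
    rfl
  rw [Finset.sum_congr rfl fun v _ => hRHS v]
  exact core a ha k
end

section
/- (Otter–Dwass formula) Let (X_i)_{i≥1} be i.i.d. nonnegative-integer-valued random variables and let T denote the total progeny of a Galton–Watson branching process with offspring distribution X_1 started from m ≥ 1 initial individuals. Then for all k ≥ 1, P(T = k) = (m/k) P(X_1 + ⋯ + X_k = k - m). -/
open MeasureTheory ProbabilityTheory Set Filter
open scoped ENNReal

open Finset
open scoped Fin.NatCast

section Walk
variable (k m : ℕ) (a : ℕ → ℤ)

/-- partial sums -/
private def Wk (a : ℕ → ℤ) (n : ℕ) : ℤ := ∑ i ∈ range n, a i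

lemma Wk_succ (n : ℕ) : Wk a (n + 1) = Wk a n + a n := Finset.sum_range_succ a n

lemma Wk_shift (r t : ℕ) : Wk a (r + t) = Wk a r + ∑ i ∈ range t, a (r + i) := by
  induction t with
  | zero => simp [Wk]
  | succ t ih =>
      rw [← Nat.add_assoc, Wk_succ, ih, Finset.sum_range_succ]
      ring

variable {k m a}
variable (hk : 1 ≤ k) (hm : 1 ≤ m) (ha1 : ∀ n, -1 ≤ a n)
  (hper : ∀ n, a (n + k) = a n) (hsum : ∑ i ∈ range k, a i = -(m:ℤ))

include hsum hper in
lemma Wk_add (n : ℕ) : Wk a (n + k) = Wk a n - m := by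
  induction n with
  | zero => simpa [Wk] using hsum
  | succ n ih =>
      have : n + 1 + k = (n + k) + 1 := by omega
      rw [this, Wk_succ, ih, hper, Wk_succ]; ring

include ha1 in
lemma Wk_ivt : ∀ N n v, n ≤ N → Wk a N ≤ v → v ≤ Wk a n → ∃ s, n ≤ s ∧ s ≤ N ∧ Wk a s = v := by
  intro N
  induction N with
  | zero =>
      intro n v hn h1 h2
      have hn0 : n = 0 := Nat.le_zero.mp hn
      subst hn0
      exact ⟨0, le_rfl, le_rfl, le_antisymm h1 h2⟩
  | succ N ih =>
      intro n v hn h1 h2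
      rcases Nat.eq_or_lt_of_le hn with h | h
      · subst h
        exact ⟨N + 1, le_rfl, le_rfl, le_antisymm h1 h2⟩
      · have hnN : n ≤ N := by omega
        by_cases hc : Wk a N ≤ v
        · obtain ⟨s, hs1, hs2, hs3⟩ := ih n v hnN hc h2
          exact ⟨s, hs1, by omega, hs3⟩
        · push_neg at hc
          have hstep : Wk a N - 1 ≤ Wk a (N + 1) := by
            have := ha1 N; rw [Wk_succ]; omega
          have : Wk a (N + 1) = v := by omega
          exact ⟨N + 1, by omega, le_rfl, this⟩

include hk hm ha1 hper hsum in
lemma good_gt {r : ℕ} (hr : r < k)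
    (hgood : ∀ t, 1 ≤ t → t < k → (m:ℤ) + ∑ i ∈ range t, a (r + i) ≠ 0)
    {s : ℕ} (hs1 : r ≤ s) (hs2 : s < r + k) : Wk a (r + k) < Wk a s := by
  by_contra hcon
  push_neg at hcon
  have hWrk : Wk a (r + k) = Wk a r - m := Wk_add hper hsum r
  obtain ⟨s', hrs', hs's, heq⟩ :=
    Wk_ivt ha1 s r (Wk a r - m) hs1 (by omega) (by omega)
  have hs'ne : s' ≠ r := by
    intro h; rw [h] at heq; omega
  have ht : s' = r + (s' - r) := by omega
  refine hgood (s' - r) (by omega) (by omega) ?_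
  have := Wk_shift a r (s' - r)
  rw [← ht, heq] at this
  omega

open Classical in
include hk hm ha1 hper hsum in
lemma cycle_count :
    ((range k).filter (fun r => ∀ t, 1 ≤ t → t < k →
        (m:ℤ) + ∑ i ∈ range t, a (r + i) ≠ 0)).card = m := by
  have hkne : (range k).Nonempty := Finset.nonempty_range_iff.mpr (by omega)
  set Mk : ℤ := (range k).inf' hkne (Wk a) with hMkdef
  have hMk_le : ∀ s, s < k → Mk ≤ Wk a s := fun s hs =>
    Finset.inf'_le _ (Finset.mem_range.mpr hs)
  obtain ⟨s0, hs0k, hs0⟩ : ∃ s0 ∈ range k, Mk = Wk a s0 :=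
    Finset.exists_mem_eq_inf' hkne (Wk a)
  rw [Finset.mem_range] at hs0k
  have hW0 : Wk a 0 = 0 := by simp [Wk]
  have hMk0 : Mk ≤ 0 := by
    have := hMk_le 0 (by omega); omega
  -- the target interval
  have hcardI : (Finset.Icc (Mk - m) (Mk - 1)).card = m := by
    rw [Int.card_Icc]
    simp only [show Mk - 1 + 1 - (Mk - m) = (m : ℤ) by ring]
    exact Int.toNat_natCast m
  refine Eq.trans ?_ hcardI
  apply Finset.card_nbij (fun r => Wk a (r + k))
  · -- maps to
    intro r hr
    simp only [Finset.mem_coe, Finset.mem_filter, Finset.mem_range] at hr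
    obtain ⟨hrk, hgood⟩ := hr
    have hWrk : Wk a (r + k) = Wk a r - m := Wk_add hper hsum r
    have h1 : Mk - m ≤ Wk a (r + k) := by
      have := hMk_le r hrk; omega
    have h2 : Wk a (r + k) < Mk := by
      rcases le_or_gt r s0 with h | h
      · have := good_gt hk hm ha1 hper hsum hrk hgood h (by omega)
        omega
      · have hlt := good_gt hk hm ha1 hper hsum hrk hgood
          (show r ≤ s0 + k by omega) (by omega)
        have : Wk a (s0 + k) = Wk a s0 - m := Wk_add hper hsum s0
        omega
    simp only [Finset.mem_coe, Finset.coe_Icc, Set.mem_Icc, Finset.mem_Icc]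
    omega
  · -- injective
    intro r hr r' hr' hEq
    have hEq' : Wk a (r + k) = Wk a (r' + k) := hEq
    simp only [Finset.mem_coe, Finset.mem_filter, Finset.mem_range] at hr hr'
    rcases lt_trichotomy r r' with h | h | h
    · have := good_gt hk hm ha1 hper hsum hr'.1 hr'.2
        (show r' ≤ r + k by omega) (by omega)
      omega
    · exact h
    · have := good_gt hk hm ha1 hper hsum hr.1 hr.2
        (show r ≤ r' + k by omega) (by omega)
      omega
  · -- surjective
    intro v hv
    simp only [Finset.coe_Icc, Set.mem_Icc] at hv
    have hvneg : v ≤ -1 := by omega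
    have hWs0k : Wk a (s0 + k) = Wk a s0 - m := Wk_add hper hsum s0
    obtain ⟨n0, _, hn0le, hn0⟩ :=
      Wk_ivt ha1 (s0 + k) 0 v (by omega) (by omega) (by omega)
    have hex : ∃ n, Wk a n = v := ⟨n0, hn0⟩
    set n := Nat.find hex with hn
    have hWn : Wk a n = v := Nat.find_spec hex
    have hnle : n ≤ s0 + k := le_trans (Nat.find_min' hex hn0) hn0le
    have hrec : ∀ s, s < n → v < Wk a s := by
      intro s hs
      by_contra hcon
      push_neg at hcon
      rcases eq_or_lt_of_le hcon with h | h
      · exact Nat.find_min hex hs h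
      · obtain ⟨s', _, hs's, heq⟩ :=
          Wk_ivt ha1 s 0 v (by omega) (by omega) (by omega)
        exact Nat.find_min hex (by omega) heq
    have hnk : k ≤ n := by
      by_contra hcon
      push_neg at hcon
      have := hMk_le n hcon
      omega
    have hn2k : n < 2 * k := by omega
    refine ⟨n - k, ?_, ?_⟩
    · simp only [Finset.mem_coe, Finset.mem_filter, Finset.mem_range]
      constructor
      · omega
      · intro t ht1 ht2 hzero
        have hsh := Wk_shift a (n - k) t
        have hadd : Wk a (n - k + k) = Wk a (n - k) - m := Wk_add hper hsum _
        have hnk' : n - k + k = n := by omega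
        rw [hnk'] at hadd
        have hlt := hrec (n - k + t) (by omega)
        omega
    · show Wk a (n - k + k) = v
      have hnk' : n - k + k = n := by omega
      rw [hnk', hWn]

end Walk

/-- Otter–Dwass formula: for the random walk
`S_t = m + Σ_{i<t} (X_i - 1)` with i.i.d. offspring `X_i`, the total progeny
`T = inf{t ≥ 1 : S_t = 0}` of a Galton–Watson process started from `m`
individuals satisfies `P(T = k) = (m/k) P(X_1 + ⋯ + X_k = k - m)`. -/
theorem stmt_10 {Ω : Type*} [MeasurableSpace Ω] (P : Measure Ω)
    [IsProbabilityMeasure P]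
    (X : ℕ → Ω → ℕ) (hmeas : ∀ i, Measurable (X i))
    (hindep : iIndepFun X P)
    (hident : ∀ i, IdentDistrib (X i) (X 0) P P)
    (m : ℕ) (hm : 1 ≤ m) (k : ℕ) (hk : 1 ≤ k) :
    P {ω | ((m:ℤ) + ∑ i ∈ Finset.range k, ((X i ω : ℤ) - 1) = 0) ∧
           ∀ t, 1 ≤ t → t < k →
             (m:ℤ) + ∑ i ∈ Finset.range t, ((X i ω : ℤ) - 1) ≠ 0}
      = ((m : ℝ≥0∞) / k) *
          P {ω | (∑ i ∈ Finset.range k, (X i ω : ℤ)) = (k:ℤ) - m} := by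
  classical
  haveI : NeZero k := ⟨by omega⟩
  set V : Ω → (Fin k → ℕ) := fun ω i => X i ω with hVdef
  have hVmeas : Measurable V := measurable_pi_lambda _ (fun i => hmeas i)
  set ν : ℕ → ℝ≥0∞ := fun n => P (X 0 ⁻¹' {n}) with hνdef
  set w : (Fin k → ℕ) → ℝ≥0∞ := fun y => ∏ i : Fin k, ν (y i) with hwdef
  -- law of a single point
  have hsingle : ∀ y : Fin k → ℕ, P (V ⁻¹' {y}) = w y := by
    intro y
    have hset : V ⁻¹' {y} = ⋂ n ∈ Finset.range k, X n ⁻¹' {y (n : Fin k)} := by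
      ext ω
      simp only [Set.mem_preimage, Set.mem_singleton_iff, Set.mem_iInter, funext_iff, hVdef]
      constructor
      · intro h n hn
        rw [Finset.mem_range] at hn
        have h2 := h ((n : ℕ) : Fin k)
        rwa [Fin.val_cast_of_lt hn] at h2
      · intro h i
        have h2 := h (i : ℕ) (Finset.mem_range.mpr i.isLt)
        rwa [Fin.cast_val_eq_self] at h2
    have hmul := hindep.measure_inter_preimage_eq_mul (S := Finset.range k)
      (sets := fun n => {y ((n : ℕ) : Fin k)}) (fun n _ => measurableSet_singleton _)
    rw [hset, hmul]
    have hfac : ∀ n, P (X n ⁻¹' {y ((n : ℕ) : Fin k)}) = ν (y ((n : ℕ) : Fin k)) := by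
      intro n
      exact (hident n).measure_mem_eq (measurableSet_singleton _)
    rw [Finset.prod_congr rfl (fun n _ => hfac n)]
    rw [hwdef, ← Fin.prod_univ_eq_prod_range (fun n => ν (y ((n : ℕ) : Fin k))) k]
    exact Finset.prod_congr rfl (fun i _ => by rw [Fin.cast_val_eq_self])
  -- law of an arbitrary set
  have hlaw : ∀ S : Set (Fin k → ℕ), P (V ⁻¹' S) = ∑' y, S.indicator w y := by
    intro S
    have hU : V ⁻¹' S = ⋃ y ∈ S, V ⁻¹' {y} := by
      ext ω; simp
    rw [hU, measure_biUnion (Set.to_countable S) ?_ (fun y _ => hVmeas (measurableSet_singleton y))]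
    · rw [← tsum_subtype S w]
      exact tsum_congr fun y => hsingle y
    · intro y _ z _ hyz
      apply Set.disjoint_left.mpr
      intro ω h1 h2
      exact hyz (h1.symm.trans h2 : _)
  -- the events
  set A : ℕ → Set (Fin k → ℕ) := fun r => {y | (∑ i : Fin k, (y i : ℤ)) = (k:ℤ) - m ∧
      ∀ t, 1 ≤ t → t < k →
        (m:ℤ) + ∑ i ∈ Finset.range t, ((y (((r + i : ℕ)) : Fin k) : ℤ) - 1) ≠ 0} with hAdef
  set SumS : Set (Fin k → ℕ) := {y | (∑ i : Fin k, (y i : ℤ)) = (k:ℤ) - m} with hSdef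
  -- rotation equivalence
  have hrotP : ∀ r : ℕ, r < k → P (V ⁻¹' A r) = P (V ⁻¹' A 0) := by
    intro r hrk
    set c : Fin k := (r : Fin k) with hcdef
    set σ : (Fin k → ℕ) ≃ (Fin k → ℕ) :=
      { toFun := fun y i => y (c + i)
        invFun := fun y i => y (-c + i)
        left_inv := fun y => funext fun i => by simp
        right_inv := fun y => funext fun i => by simp } with hσdef
    have hw_rot : ∀ y, w (σ y) = w y := by
      intro y
      exact Equiv.prod_comp (Equiv.addLeft c) (fun j => ν (y j))
    have hmem : ∀ y, y ∈ A r ↔ σ y ∈ A 0 := by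
      intro y
      have hterm : ∀ i : ℕ, (σ y) (((0 + i : ℕ)) : Fin k) = y (((r + i : ℕ)) : Fin k) := by
        intro i
        show y (c + (((0 + i : ℕ)) : Fin k)) = y (((r + i : ℕ)) : Fin k)
        congr 1
        rw [zero_add, Nat.cast_add, hcdef]
      have hsum' : (∑ i : Fin k, ((σ y) i : ℤ)) = ∑ i : Fin k, (y i : ℤ) := by
        exact Equiv.sum_comp (Equiv.addLeft c) (fun j => (y j : ℤ))
      simp only [hAdef, Set.mem_setOf_eq, hsum']
      constructor
      · rintro ⟨h1, h2⟩
        refine ⟨h1, fun t ht1 ht2 => ?_⟩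
        rw [Finset.sum_congr rfl (fun i _ => by rw [hterm i])]
        exact h2 t ht1 ht2
      · rintro ⟨h1, h2⟩
        refine ⟨h1, fun t ht1 ht2 => ?_⟩
        have h3 := h2 t ht1 ht2
        rwa [Finset.sum_congr rfl (fun i _ => by rw [hterm i])] at h3
    rw [hlaw, hlaw]
    rw [← Equiv.tsum_eq σ.symm (fun y => (A r).indicator w y)]
    apply tsum_congr
    intro z
    by_cases hz : z ∈ A 0
    · have h1 : σ.symm z ∈ A r := by
        rw [hmem (σ.symm z), Equiv.apply_symm_apply]; exact hz
      have h2 : w (σ.symm z) = w z := by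
        conv_rhs => rw [← Equiv.apply_symm_apply σ z]
        rw [hw_rot]
      rw [Set.indicator_of_mem h1, Set.indicator_of_mem hz, h2]
    · have h1 : σ.symm z ∉ A r := by
        rw [hmem (σ.symm z), Equiv.apply_symm_apply]; exact hz
      rw [Set.indicator_of_notMem h1, Set.indicator_of_notMem hz]
  -- counting via the cycle lemma
  have hcount : ∀ y : Fin k → ℕ,
      ∑ r ∈ Finset.range k, (A r).indicator w y = (m : ℝ≥0∞) * SumS.indicator w y := by
    intro y
    by_cases hy : y ∈ SumS
    · set a : ℕ → ℤ := fun n => (y ((n : ℕ) : Fin k) : ℤ) - 1 with hadef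
      have ha1 : ∀ n, -1 ≤ a n := by
        intro n; simp only [hadef]
        have : (0:ℤ) ≤ (y ((n : ℕ) : Fin k) : ℤ) := Int.natCast_nonneg _
        omega
      have hper : ∀ n, a (n + k) = a n := by
        intro n; simp only [hadef]
        congr 2
        push_cast
        simp
      have hsumrange : ∑ i ∈ Finset.range k, (y ((i : ℕ) : Fin k) : ℤ) = (k:ℤ) - m := by
        rw [← Fin.sum_univ_eq_sum_range (fun n => (y ((n : ℕ) : Fin k) : ℤ)) k]
        rw [Finset.sum_congr rfl (fun i _ => by rw [Fin.cast_val_eq_self])]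
        exact hy
      have hsuma : ∑ i ∈ Finset.range k, a i = -(m:ℤ) := by
        simp only [hadef]
        rw [Finset.sum_sub_distrib, hsumrange, Finset.sum_const, Finset.card_range]
        push_cast; ring
      have hcard := cycle_count hk hm ha1 hper hsuma
      have hAiff : ∀ r, y ∈ A r ↔ ∀ t, 1 ≤ t → t < k →
          (m:ℤ) + ∑ i ∈ Finset.range t, a (r + i) ≠ 0 := by
        intro r
        simp only [hAdef, Set.mem_setOf_eq, hadef]
        exact ⟨fun h => h.2, fun h => ⟨hy, h⟩⟩
      calc ∑ r ∈ Finset.range k, (A r).indicator w y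
          = ∑ r ∈ Finset.range k, if (∀ t, 1 ≤ t → t < k →
              (m:ℤ) + ∑ i ∈ Finset.range t, a (r + i) ≠ 0) then w y else 0 := by
            refine Finset.sum_congr rfl fun r _ => ?_
            by_cases h : y ∈ A r
            · rw [Set.indicator_of_mem h, if_pos ((hAiff r).mp h)]
            · rw [Set.indicator_of_notMem h, if_neg (fun hh => h ((hAiff r).mpr hh))]
        _ = ((Finset.range k).filter (fun r => ∀ t, 1 ≤ t → t < k →
              (m:ℤ) + ∑ i ∈ Finset.range t, a (r + i) ≠ 0)).card • w y := by
            rw [Finset.sum_ite (p := fun r => ∀ t, 1 ≤ t → t < k →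
                (m:ℤ) + ∑ i ∈ Finset.range t, a (r + i) ≠ 0) (f := fun _ => w y) (g := fun _ => 0), Finset.sum_const, Finset.sum_const_zero, add_zero]
        _ = (m : ℝ≥0∞) * SumS.indicator w y := by
            rw [hcard, Set.indicator_of_mem hy, nsmul_eq_mul]
    · have hnot : ∀ r, y ∉ A r := by
        intro r hr
        exact hy hr.1
      rw [Set.indicator_of_notMem hy, mul_zero]
      exact Finset.sum_eq_zero fun r _ => Set.indicator_of_notMem (hnot r) w
  -- summing over rotations
  have hsum_r : ∑ r ∈ Finset.range k, P (V ⁻¹' A r)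
      = (m : ℝ≥0∞) * P (V ⁻¹' SumS) := by
    calc ∑ r ∈ Finset.range k, P (V ⁻¹' A r)
        = ∑ r ∈ Finset.range k, ∑' y, (A r).indicator w y :=
          Finset.sum_congr rfl fun r _ => hlaw (A r)
      _ = ∑' y, ∑ r ∈ Finset.range k, (A r).indicator w y :=
          (Summable.tsum_finsetSum (fun r _ => ENNReal.summable)).symm
      _ = ∑' y, (m : ℝ≥0∞) * SumS.indicator w y := tsum_congr hcount
      _ = (m : ℝ≥0∞) * ∑' y, SumS.indicator w y := ENNReal.tsum_mul_left
      _ = (m : ℝ≥0∞) * P (V ⁻¹' SumS) := by rw [← hlaw]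
  have hconst : ∑ r ∈ Finset.range k, P (V ⁻¹' A r) = (k : ℝ≥0∞) * P (V ⁻¹' A 0) := by
    rw [Finset.sum_congr rfl (fun r hr => hrotP r (Finset.mem_range.mp hr)),
      Finset.sum_const, Finset.card_range, nsmul_eq_mul]
  -- identify the events
  have hL : {ω | ((m:ℤ) + ∑ i ∈ Finset.range k, ((X i ω : ℤ) - 1) = 0) ∧
           ∀ t, 1 ≤ t → t < k →
             (m:ℤ) + ∑ i ∈ Finset.range t, ((X i ω : ℤ) - 1) ≠ 0} = V ⁻¹' A 0 := by
    ext ω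
    simp only [Set.mem_setOf_eq, Set.mem_preimage, hAdef, hVdef]
    have hterm : ∀ t, t ≤ k → ∀ i ∈ Finset.range t,
        ((X (((0 + i : ℕ) : Fin k) : ℕ) ω : ℤ) - 1) = ((X i ω : ℤ) - 1) := by
      intro t ht i hi
      rw [Finset.mem_range] at hi
      congr 2
      rw [zero_add, Fin.val_cast_of_lt (by omega)]
    have hsum1 : (∑ i : Fin k, (X (i : ℕ) ω : ℤ))
        = ∑ i ∈ Finset.range k, (X i ω : ℤ) :=
      Fin.sum_univ_eq_sum_range (fun n => (X n ω : ℤ)) k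
    have hsub : ∑ i ∈ Finset.range k, ((X i ω : ℤ) - 1)
        = (∑ i ∈ Finset.range k, (X i ω : ℤ)) - k := by
      rw [Finset.sum_sub_distrib, Finset.sum_const, Finset.card_range]
      push_cast; ring
    constructor
    · rintro ⟨h1, h2⟩
      constructor
      · rw [hsum1]; rw [hsub] at h1; omega
      · intro t ht1 ht2
        rw [Finset.sum_congr rfl (hterm t (by omega))]
        exact h2 t ht1 ht2
    · rintro ⟨h1, h2⟩
      constructor
      · rw [hsum1] at h1; rw [hsub]; omega
      · intro t ht1 ht2
        have h3 := h2 t ht1 ht2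
        rwa [Finset.sum_congr rfl (hterm t (by omega))] at h3
  have hR : {ω | (∑ i ∈ Finset.range k, (X i ω : ℤ)) = (k:ℤ) - m} = V ⁻¹' SumS := by
    ext ω
    simp only [Set.mem_setOf_eq, Set.mem_preimage, hSdef, hVdef]
    rw [Fin.sum_univ_eq_sum_range (fun n => (X n ω : ℤ)) k]
  rw [hL, hR]
  -- final algebra
  have hk0 : (k : ℝ≥0∞) ≠ 0 := by
    simp only [ne_eq, Nat.cast_eq_zero]; omega
  have hktop : (k : ℝ≥0∞) ≠ ⊤ := ENNReal.natCast_ne_top k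
  have hmain : (k : ℝ≥0∞) * P (V ⁻¹' A 0) = (m : ℝ≥0∞) * P (V ⁻¹' SumS) :=
    hconst ▸ hsum_r
  have h1 : P (V ⁻¹' A 0) = (m : ℝ≥0∞) * P (V ⁻¹' SumS) / k :=
    (ENNReal.eq_div_iff hk0 hktop).mpr hmain
  rw [h1, ENNReal.div_eq_inv_mul, ENNReal.div_eq_inv_mul, mul_assoc]
end

section
/- Let ρ_n be the survival probability of a Galton–Watson process with Poi(W_n*) offspring, where ε_n = E[W_n*] - 1 ≥ 0. Then ρ_n · E[(W_n*)^2 · 1{ρ_n W_n* ≤ 1/2}] ≤ 4 ε_n. In particular, if E[(W_n*)^2] is bounded below by a constant c̃ > 0 uniformly (as when sup_n E[(W_n*)^2·1{ρ_nW_n*≤1/2}] ≥ c̃), then ρ_n ≤ (4/c̃) ε_n. -/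
open MeasureTheory Set Filter

lemma exp_quad_aux (x : ℝ) (hx : x ≤ 1/2) : 1 - x + x^2/4 ≤ Real.exp (-x) := by
  have h := Real.add_one_le_exp (-x/2)
  have h2 : Real.exp (-x) = Real.exp (-x/2)^2 := by
    rw [sq, ← Real.exp_add]; ring_nf
  have h3 : (0:ℝ) ≤ 1 - x/2 := by linarith
  nlinarith [Real.exp_pos (-x/2)]

/-- for a near-critical mixed Poisson branching process with
`E[Wₙ*] = 1 + εₙ`, the survival probability `ρₙ` satisfies
`ρₙ · E[(Wₙ*)² 1{ρₙWₙ* ≤ 1/2}] ≤ 4εₙ`; in particular, a uniform lower bound on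
the truncated second moment yields `ρₙ ≤ (4/c̃) εₙ`. -/
theorem stmt_12 (μ : Measure ℝ) [IsProbabilityMeasure μ]
    (hsupp : μ (Set.Iio 0) = 0)
    (ε ρ : ℝ) (hε : 0 ≤ ε)
    (hint : Integrable id μ) (hmean : ∫ w, w ∂μ = 1 + ε)
    (hρ0 : 0 ≤ ρ) (hρ1 : ρ ≤ 1)
    (hfix : 1 - ρ = ∫ w, Real.exp (-ρ * w) ∂μ) :
    ρ * ∫ w in {w : ℝ | ρ * w ≤ 1/2}, w ^ 2 ∂μ ≤ 4 * ε ∧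
    ∀ c : ℝ, 0 < c → c ≤ ∫ w in {w : ℝ | ρ * w ≤ 1/2}, w ^ 2 ∂μ →
      ρ ≤ (4 / c) * ε := by
  set S : Set ℝ := {w : ℝ | ρ * w ≤ 1/2} with hSdef
  have hS : MeasurableSet S := measurableSet_le (measurable_const.mul measurable_id) measurable_const
  set I : ℝ := ∫ w in S, w ^ 2 ∂μ with hIdef
  have hI0 : 0 ≤ I := setIntegral_nonneg hS (fun w _ => sq_nonneg w)
  have hae : ∀ᵐ w ∂μ, 0 ≤ w := by
    rw [ae_iff]
    convert hsupp using 2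
    ext w; simp [not_le]
  have hmain : ρ * I ≤ 4 * ε := by
    rcases eq_or_lt_of_le hρ0 with hz | hρpos
    · rw [← hz]; simpa using mul_nonneg (by norm_num : (0:ℝ) ≤ 4) hε
    -- integrability facts
    have hexp_int : Integrable (fun w => Real.exp (-ρ * w)) μ := by
      refine Integrable.mono' (integrable_const 1) ?_ ?_
      · exact (Real.continuous_exp.comp (continuous_const.mul continuous_id)).aestronglyMeasurable
      · filter_upwards [hae] with w hw
        rw [Real.norm_eq_abs, abs_of_pos (Real.exp_pos _)]
        exact Real.exp_le_one_iff.mpr (by nlinarith)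
    have hind_meas : Measurable (S.indicator (fun w => ρ^2 * w^2 / 4)) :=
      Measurable.indicator (by measurability) hS
    have hind_int : Integrable (S.indicator (fun w => ρ^2 * w^2 / 4)) μ := by
      refine Integrable.mono' (integrable_const (1/16 : ℝ)) hind_meas.aestronglyMeasurable ?_
      filter_upwards [hae] with w hw
      rw [Real.norm_eq_abs]
      by_cases hwS : w ∈ S
      · rw [Set.indicator_of_mem hwS]
        have h1 : ρ * w ≤ 1/2 := hwS
        have h2 : 0 ≤ ρ * w := mul_nonneg hρ0 hw
        rw [abs_of_nonneg (by positivity)]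
        nlinarith
      · rw [Set.indicator_of_notMem hwS]; norm_num
    have hlin_int : Integrable (fun w => 1 - ρ * w) μ :=
      (integrable_const (1:ℝ)).sub (hint.const_mul ρ)
    -- pointwise inequality
    have hpt : ∀ w : ℝ, (1 - ρ * w) + S.indicator (fun w => ρ^2 * w^2 / 4) w ≤ Real.exp (-ρ * w) := by
      intro w
      by_cases hwS : w ∈ S
      · rw [Set.indicator_of_mem hwS]
        have := exp_quad_aux (ρ * w) hwS
        have heq : ρ^2 * w^2 / 4 = (ρ * w)^2 / 4 := by ring
        rw [heq]
        calc 1 - ρ * w + (ρ * w)^2/4 ≤ Real.exp (-(ρ*w)) := this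
          _ = Real.exp (-ρ * w) := by ring_nf
      · rw [Set.indicator_of_notMem hwS]
        have := Real.add_one_le_exp (-(ρ * w))
        calc 1 - ρ * w + 0 = -(ρ*w) + 1 := by ring
          _ ≤ Real.exp (-(ρ*w)) := this
          _ = Real.exp (-ρ * w) := by ring_nf
    have hmono : ∫ w, ((1 - ρ * w) + S.indicator (fun w => ρ^2 * w^2 / 4) w) ∂μ
        ≤ ∫ w, Real.exp (-ρ * w) ∂μ :=
      integral_mono (hlin_int.add hind_int) hexp_int hpt
    have hsplit : ∫ w, ((1 - ρ * w) + S.indicator (fun w => ρ^2 * w^2 / 4) w) ∂μ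
        = (1 - ρ * (1 + ε)) + ρ^2/4 * I := by
      rw [integral_add hlin_int hind_int, integral_indicator hS]
      have h1 : ∫ w, (1 - ρ * w) ∂μ = 1 - ρ * (1 + ε) := by
        have hs := integral_sub (integrable_const (1:ℝ)) (hint.const_mul ρ)
        simp only [id] at hs
        rw [hs, MeasureTheory.integral_const_mul]
        simp [hmean]
      have h2 : ∫ w in S, ρ^2 * w^2 / 4 ∂μ = ρ^2/4 * I := by
        rw [hIdef, ← MeasureTheory.integral_const_mul]
        congr 1; ext w; ring
      rw [h1, h2]
    rw [hsplit, ← hfix] at hmono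
    have h1 : ρ * (ρ * I) ≤ ρ * (4 * ε) := by nlinarith
    exact le_of_mul_le_mul_left h1 hρpos
  refine ⟨hmain, fun c hc hcI => ?_⟩
  have h2 : ρ * c ≤ 4 * ε := le_trans (mul_le_mul_of_nonneg_left hcI hρ0) hmain
  rw [div_mul_eq_mul_div, le_div_iff₀ hc]
  nlinarith
end

section
/- Let (T_l)_{l≥1} be i.i.d. nonnegative-integer-valued random variables such that P(T_1 ≥ k) ≤ K k^{-1/δ} for all k ≥ 1, where K > 0 and δ > 1, and let M be a nonnegative-integer-valued random variable independent of (T_l) with E[M] < ∞. Then there is a constant c_δ > 0 depending only on δ such that for all k ≥ 1, P(Σ_{l=1}^M T_l ≥ k) ≤ c_δ K E[M] k^{-1/δ}. -/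
open MeasureTheory ProbabilityTheory Set Filter
open scoped ENNReal

lemma aux_tsum_ite (n : ℕ) (x : ℕ → ℝ≥0∞) :
    ∑' l, (if l < n then x l else 0) = ∑ l ∈ Finset.range n, x l := by
  rw [tsum_eq_sum (s := Finset.range n) (by intro l hl; simp [Finset.mem_range] at hl; simp [hl])]
  apply Finset.sum_congr rfl
  intro l hl; simp [Finset.mem_range] at hl; simp [hl]

lemma aux_min_sum (n k : ℕ) :
    ∑ j ∈ Finset.range k, (if j + 1 ≤ n then 1 else 0) = min n k := by
  induction k with
  | zero => simp
  | succ k ih => rw [Finset.sum_range_succ, ih]; by_cases h : k + 1 ≤ n <;> simp [h] <;> omega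

lemma aux_sum_rpow (a : ℝ) (ha0 : 0 < a) (ha1 : a < 1) (k : ℕ) (hk : 1 ≤ k) :
    ∑ j ∈ Finset.range k, ((j : ℝ) + 1) ^ (-a) ≤ (1 + 1/(1-a)) * (k:ℝ) ^ (1-a) := by
  have h1a : (0:ℝ) < 1 - a := by linarith
  have hk1 : (1:ℝ) ≤ (k:ℝ) := by exact_mod_cast hk
  have hkpow : (1:ℝ) ≤ (k:ℝ) ^ (1-a) := Real.one_le_rpow hk1 h1a.le
  obtain ⟨m, rfl⟩ : ∃ m, k = m + 1 := ⟨k - 1, by omega⟩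
  rw [Finset.sum_range_succ']
  have hant : AntitoneOn (fun x : ℝ => x ^ (-a)) (Set.Icc (1:ℝ) (1 + m)) := by
    intro x hx y hy hxy
    exact Real.rpow_le_rpow_of_nonpos (lt_of_lt_of_le one_pos hx.1) hxy (by linarith)
  have hle := hant.sum_le_integral
  have hint : ∫ x in (1:ℝ)..(1 + (m:ℝ)), x ^ (-a) = ((1+(m:ℝ)) ^ (-a+1) - 1 ^ (-a+1)) / (-a+1) :=
    integral_rpow (Or.inl (by linarith))
  have hcast : (1:ℝ) + (m:ℝ) = ((m:ℝ) + 1) := by ring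
  have key : ∑ i ∈ Finset.range m, ((i:ℝ) + 1 + 1) ^ (-a)
      ≤ (((m:ℝ)+1) ^ (1-a)) / (1-a) := by
    calc ∑ i ∈ Finset.range m, ((i:ℝ) + 1 + 1) ^ (-a)
        = ∑ i ∈ Finset.range m, ((1:ℝ) + ((i:ℕ) + 1 : ℕ)) ^ (-a) := by
          apply Finset.sum_congr rfl; intro i _; push_cast; ring_nf
      _ ≤ ∫ x in (1:ℝ)..(1 + (m:ℝ)), x ^ (-a) := by exact_mod_cast hle
      _ = ((1+(m:ℝ)) ^ (-a+1) - 1 ^ (-a+1)) / (-a+1) := hint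
      _ ≤ (((m:ℝ)+1) ^ (1-a)) / (1-a) := by
          rw [Real.one_rpow, hcast, (by ring : -a+1 = 1-a)]
          gcongr
          linarith
  push_cast
  have h0 : ((0:ℝ) + 1) ^ (-a) = 1 := by norm_num
  rw [h0]
  have : (1 + 1/(1-a)) * ((m:ℝ)+1) ^ (1-a)
      = ((m:ℝ)+1) ^ (1-a) + (((m:ℝ)+1) ^ (1-a)) / (1-a) := by ring
  rw [this]
  push_cast at hkpow key ⊢
  linarith

lemma aux_tail {Ω : Type} [MeasurableSpace Ω] (P : Measure Ω) (M : Ω → ℕ)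
    (hM : Measurable M) :
    ∑' l, P {ω | l < M ω} = ∫⁻ ω, (M ω : ℝ≥0∞) ∂P := by
  have hms : ∀ l : ℕ, MeasurableSet {ω | l < M ω} := fun l => hM .of_discrete
  have h1 : ∀ l : ℕ, P {ω | l < M ω}
      = ∫⁻ ω, (if l < M ω then (1:ℝ≥0∞) else 0) ∂P := by
    intro l
    rw [← lintegral_indicator_one (hms l)]
    congr 1; ext ω; simp [Set.indicator_apply, Set.mem_setOf_eq]
  simp_rw [h1]
  rw [← lintegral_tsum (fun l => ((measurable_const.ite (hms l) measurable_const)).aemeasurable)]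
  congr 1; ext ω
  rw [aux_tsum_ite (M ω) (fun _ => 1)]
  simp

/-- tail bound for a random sum `Σ_{l<M} T_l` of i.i.d. variables
with `P(T ≥ k) ≤ K k^{-1/δ}`, with random index `M` independent of the
summands: `P(Σ_{l<M} T_l ≥ k) ≤ c_δ K E[M] k^{-1/δ}`. -/
theorem stmt_15 (δ : ℝ) (hδ : 1 < δ) :
    ∃ c : ℝ, 0 < c ∧
      ∀ (Ω : Type) (_ : MeasurableSpace Ω) (P : Measure Ω),
        IsProbabilityMeasure P →
        ∀ K : ℝ, 0 < K →
        ∀ (T : ℕ → Ω → ℕ) (M : Ω → ℕ),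
          (∀ i, Measurable (T i)) → Measurable M →
          iIndepFun T P →
          (∀ i, IdentDistrib (T i) (T 0) P P) →
          IndepFun M (fun ω => fun i => T i ω) P →
          Integrable (fun ω => (M ω : ℝ)) P →
          (∀ k : ℕ, 1 ≤ k →
            P {ω | k ≤ T 0 ω} ≤ ENNReal.ofReal (K * (k:ℝ) ^ (-(1:ℝ)/δ))) →
          ∀ k : ℕ, 1 ≤ k →
            P {ω | k ≤ ∑ l ∈ Finset.range (M ω), T l ω}
              ≤ ENNReal.ofReal
                  (c * K * (∫ ω, (M ω : ℝ) ∂P) * (k:ℝ) ^ (-(1:ℝ)/δ)) := by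
  set a : ℝ := 1/δ with ha_def
  have ha0 : 0 < a := by positivity
  have ha1 : a < 1 := by rw [ha_def]; rw [div_lt_one (by linarith)]; linarith
  have hc0 : (0:ℝ) < 2 + 1/(1-a) := by
    have h1 : (0:ℝ) < 1 - a := by linarith
    positivity
  refine ⟨2 + 1/(1-a), hc0, ?_⟩
  intro Ω mΩ P hP K hK T M hT hM hiid hident hMT hint htail k hk
  have hδ0 : (0:ℝ) < δ := by linarith
  have hneg : -(1:ℝ)/δ = -a := by rw [ha_def]; ring
  have hkR : (0:ℝ) < (k:ℝ) := by exact_mod_cast hk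
  -- sets
  set A : Set Ω := ⋃ l, ({ω | l < M ω} ∩ {ω | k ≤ T l ω}) with hA_def
  set S : Ω → ℝ≥0∞ := fun ω => ∑' l, (if l < M ω then (min (T l ω) k : ℝ≥0∞) else 0) with hS_def
  set B : Set Ω := {ω | (k:ℝ≥0∞) ≤ S ω} with hB_def
  set τ : ℝ≥0∞ := P {ω | k ≤ T 0 ω} with hτ_def
  set EM : ℝ≥0∞ := ∫⁻ ω, (M ω : ℝ≥0∞) ∂P with hEM_def
  set μk : ℝ≥0∞ := ∫⁻ ω, (min (T 0 ω) k : ℝ≥0∞) ∂P with hμk_def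
  have hms : ∀ l : ℕ, MeasurableSet {ω | l < M ω} := fun l => hM .of_discrete
  -- inclusion
  have hincl : {ω | k ≤ ∑ l ∈ Finset.range (M ω), T l ω} ⊆ A ∪ B := by
    intro ω hω
    by_cases hA : ω ∈ A
    · exact Or.inl hA
    · refine Or.inr ?_
      simp only [hA_def, Set.mem_iUnion, Set.mem_inter_iff, Set.mem_setOf_eq, not_exists,
        not_and, not_le] at hA
      have hSω : S ω = ∑ l ∈ Finset.range (M ω), (T l ω : ℝ≥0∞) := by
        show (∑' l, (if l < M ω then ((T l ω : ℝ≥0∞) ⊓ (k:ℝ≥0∞)) else 0)) = _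
        rw [aux_tsum_ite (M ω) (fun l => ((T l ω : ℝ≥0∞) ⊓ (k:ℝ≥0∞)))]
        apply Finset.sum_congr rfl
        intro l hl
        rw [Finset.mem_range] at hl
        have h2 : (T l ω : ℝ≥0∞) ≤ (k:ℝ≥0∞) := by exact_mod_cast (hA l hl).le
        exact min_eq_left h2
      simp only [hB_def, Set.mem_setOf_eq, hSω]
      rw [← Nat.cast_sum]
      exact_mod_cast hω
  -- union bound
  have hPA : P A ≤ EM * τ := by
    calc P A ≤ ∑' l, P ({ω | l < M ω} ∩ {ω | k ≤ T l ω}) := measure_iUnion_le _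
      _ = ∑' l, P {ω | l < M ω} * τ := by
          apply tsum_congr
          intro l
          have hind : IndepFun M (T l) P := hMT.comp measurable_id (measurable_pi_apply l)
          have h1 := hind.measure_inter_preimage_eq_mul {n | l < n} {n | k ≤ n}
            .of_discrete .of_discrete
          have h2 : P {ω | k ≤ T l ω} = τ := by
            have := (hident l).measure_mem_eq (s := {n | k ≤ n}) .of_discrete
            simpa [Set.preimage_setOf_eq] using this
          simpa [Set.preimage_setOf_eq, h2] using h1
      _ = EM * τ := by rw [ENNReal.tsum_mul_right, aux_tail P M hM]
  -- Markov
  have hg : ∀ l, Measurable (fun ω => (T l ω : ℝ≥0∞) ⊓ (k:ℝ≥0∞)) :=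
    fun l => (Measurable.of_discrete (f := fun n : ℕ => (n:ℝ≥0∞) ⊓ (k:ℝ≥0∞))).comp (hT l)
  have hterm : ∀ l, Measurable (fun ω => if l < M ω then (T l ω : ℝ≥0∞) ⊓ (k:ℝ≥0∞) else 0) :=
    fun l => Measurable.ite (hms l) (hg l) measurable_const
  have hSmeas : Measurable S := Measurable.ennreal_tsum hterm
  have hPB : (k:ℝ≥0∞) * P B ≤ EM * μk := by
    have hmark := mul_meas_ge_le_lintegral₀ (μ := P) hSmeas.aemeasurable (k:ℝ≥0∞)
    refine le_trans hmark ?_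
    have hswap : ∫⁻ ω, S ω ∂P
        = ∑' l, ∫⁻ ω, (if l < M ω then (T l ω : ℝ≥0∞) ⊓ (k:ℝ≥0∞) else 0) ∂P := by
      rw [hS_def, lintegral_tsum (fun l => (hterm l).aemeasurable)]
    rw [hswap]
    have heach : ∀ l, ∫⁻ ω, (if l < M ω then (T l ω : ℝ≥0∞) ⊓ (k:ℝ≥0∞) else 0) ∂P
        = P {ω | l < M ω} * μk := by
      intro l
      have hrw : (fun ω => if l < M ω then (T l ω : ℝ≥0∞) ⊓ (k:ℝ≥0∞) else 0)
          = (fun ω => (if l < M ω then (1:ℝ≥0∞) else 0) * ((T l ω : ℝ≥0∞) ⊓ (k:ℝ≥0∞))) := by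
        ext ω; split <;> simp
      have hind : IndepFun (fun ω => if l < M ω then (1:ℝ≥0∞) else 0)
          (fun ω => (T l ω : ℝ≥0∞) ⊓ (k:ℝ≥0∞)) P :=
        hMT.comp (Measurable.of_discrete (f := fun n : ℕ => if l < n then (1:ℝ≥0∞) else 0))
          ((Measurable.of_discrete (f := fun n : ℕ => (n:ℝ≥0∞) ⊓ (k:ℝ≥0∞))).comp
            (measurable_pi_apply l))
      rw [hrw]
      have hml := lintegral_mul_eq_lintegral_mul_lintegral_of_indepFun
        (measurable_const.ite (hms l) measurable_const) (hg l) hind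
      simp only [Pi.mul_apply] at hml
      rw [hml]
      congr 1
      · rw [← lintegral_indicator_one (hms l)]
        congr 1; ext ω; simp [Set.indicator_apply, Set.mem_setOf_eq]
      · exact ((hident l).comp
          (Measurable.of_discrete (f := fun n : ℕ => (n:ℝ≥0∞) ⊓ (k:ℝ≥0∞)))).lintegral_eq
    simp_rw [heach]
    rw [ENNReal.tsum_mul_right, aux_tail P M hM]
  -- truncated mean bound
  have hμk : μk ≤ ENNReal.ofReal (K * (1 + 1/(1-a)) * (k:ℝ) ^ (1-a)) := by
    have hpt : ∀ ω, (T 0 ω : ℝ≥0∞) ⊓ (k:ℝ≥0∞)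
        = ∑ j ∈ Finset.range k, (if j+1 ≤ T 0 ω then (1:ℝ≥0∞) else 0) := by
      intro ω
      have hc : ((min (T 0 ω) k : ℕ) : ℝ≥0∞) = (T 0 ω : ℝ≥0∞) ⊓ (k:ℝ≥0∞) := by
        rcases le_total (T 0 ω) k with h|h
        · rw [min_eq_left h, inf_eq_left.mpr (by exact_mod_cast h)]
        · rw [min_eq_right h, inf_eq_right.mpr (by exact_mod_cast h)]
      rw [← hc, ← aux_min_sum (T 0 ω) k]
      push_cast
      rfl
    rw [hμk_def]
    simp_rw [hpt]
    have hmeas_j : ∀ j ∈ Finset.range k,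
        Measurable (fun ω => if j+1 ≤ T 0 ω then (1:ℝ≥0∞) else 0) := fun j _ =>
      (Measurable.of_discrete (f := fun n : ℕ => if j+1 ≤ n then (1:ℝ≥0∞) else 0)).comp (hT 0)
    rw [lintegral_finset_sum _ hmeas_j]
    have heach : ∀ j ∈ Finset.range k, ∫⁻ ω, (if j+1 ≤ T 0 ω then (1:ℝ≥0∞) else 0) ∂P
        ≤ ENNReal.ofReal (K * ((j:ℝ)+1) ^ (-a)) := by
      intro j _
      have hms0 : MeasurableSet {ω | j+1 ≤ T 0 ω} := (hT 0) .of_discrete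
      have : ∫⁻ ω, (if j+1 ≤ T 0 ω then (1:ℝ≥0∞) else 0) ∂P = P {ω | j+1 ≤ T 0 ω} := by
        rw [← lintegral_indicator_one hms0]
        congr 1; ext ω; simp [Set.indicator_apply, Set.mem_setOf_eq]
      rw [this]
      have := htail (j+1) (by omega)
      rw [hneg] at this
      simpa using this
    calc ∑ j ∈ Finset.range k, ∫⁻ ω, (if j+1 ≤ T 0 ω then (1:ℝ≥0∞) else 0) ∂P
        ≤ ∑ j ∈ Finset.range k, ENNReal.ofReal (K * ((j:ℝ)+1) ^ (-a)) :=
          Finset.sum_le_sum heach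
      _ = ENNReal.ofReal (∑ j ∈ Finset.range k, K * ((j:ℝ)+1) ^ (-a)) := by
          rw [ENNReal.ofReal_sum_of_nonneg]
          intro j _
          positivity
      _ ≤ ENNReal.ofReal (K * (1 + 1/(1-a)) * (k:ℝ) ^ (1-a)) := by
          apply ENNReal.ofReal_le_ofReal
          rw [← Finset.mul_sum]
          calc K * ∑ j ∈ Finset.range k, ((j:ℝ)+1) ^ (-a)
              ≤ K * ((1 + 1/(1-a)) * (k:ℝ) ^ (1-a)) := by
                apply mul_le_mul_of_nonneg_left (aux_sum_rpow a ha0 ha1 k hk) hK.le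
            _ = K * (1 + 1/(1-a)) * (k:ℝ) ^ (1-a) := by ring
  -- conclusion
  have hk0 : (k:ℝ≥0∞) ≠ 0 := by exact_mod_cast (by omega : k ≠ 0)
  have hkt : (k:ℝ≥0∞) ≠ ⊤ := ENNReal.natCast_ne_top k
  have h1a' : (0:ℝ) < 1 - a := by linarith
  have hCnn : (0:ℝ) ≤ K * (1 + 1/(1-a)) := by positivity
  have hxnn : (0:ℝ) ≤ (k:ℝ) ^ (-a) := Real.rpow_nonneg hkR.le _
  have hPB' : P B ≤ EM * ENNReal.ofReal (K * (1 + 1/(1-a)) * (k:ℝ) ^ (-a)) := by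
    have h1 : P B ≤ EM * μk / k := by
      rw [ENNReal.le_div_iff_mul_le (Or.inl hk0) (Or.inl hkt), mul_comm]
      exact hPB
    refine h1.trans ?_
    rw [ENNReal.div_le_iff hk0 hkt]
    have hsplit : ENNReal.ofReal (K * (1 + 1/(1-a)) * (k:ℝ) ^ (1-a))
        = ENNReal.ofReal (K * (1 + 1/(1-a)) * (k:ℝ) ^ (-a)) * (k:ℝ≥0∞) := by
      rw [← ENNReal.ofReal_natCast k, ← ENNReal.ofReal_mul (by positivity)]
      congr 1
      rw [(by ring : (1:ℝ)-a = -a + 1), Real.rpow_add hkR, Real.rpow_one]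
      ring
    calc EM * μk ≤ EM * ENNReal.ofReal (K * (1 + 1/(1-a)) * (k:ℝ) ^ (1-a)) :=
          mul_le_mul_right hμk EM
      _ = EM * ENNReal.ofReal (K * (1 + 1/(1-a)) * (k:ℝ) ^ (-a)) * (k:ℝ≥0∞) := by
          rw [hsplit]; ring
  have hτ' : τ ≤ ENNReal.ofReal (K * (k:ℝ) ^ (-a)) := by
    have := htail k hk
    rw [hneg] at this
    exact this
  have hEMr : ENNReal.ofReal (∫ ω, (M ω:ℝ) ∂P) = EM := by
    rw [MeasureTheory.ofReal_integral_eq_lintegral_ofReal hint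
      (ae_of_all _ fun ω => Nat.cast_nonneg _)]
    rw [hEM_def]
    congr 1; ext ω; exact ENNReal.ofReal_natCast _
  calc P {ω | k ≤ ∑ l ∈ Finset.range (M ω), T l ω}
      ≤ P (A ∪ B) := measure_mono hincl
    _ ≤ P A + P B := measure_union_le A B
    _ ≤ EM * τ + EM * ENNReal.ofReal (K * (1 + 1/(1-a)) * (k:ℝ) ^ (-a)) :=
        add_le_add hPA hPB'
    _ ≤ EM * ENNReal.ofReal (K * (k:ℝ) ^ (-a))
        + EM * ENNReal.ofReal (K * (1 + 1/(1-a)) * (k:ℝ) ^ (-a)) := by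
        exact add_le_add_left (mul_le_mul_right hτ' EM) _
    _ = EM * ENNReal.ofReal ((2 + 1/(1-a)) * K * (k:ℝ) ^ (-a)) := by
        rw [← mul_add, ← ENNReal.ofReal_add (by positivity) (mul_nonneg hCnn hxnn)]
        congr 2
        ring
    _ = ENNReal.ofReal ((2 + 1/(1-a)) * K * (∫ ω, (M ω:ℝ) ∂P) * (k:ℝ) ^ (-(1:ℝ)/δ)) := by
        rw [hneg, ← hEMr,
          ← ENNReal.ofReal_mul (integral_nonneg (fun ω => Nat.cast_nonneg _))]
        congr 1
        ring
end

section
/- Let F be a distribution function satisfying 1 - F(x) ≤ c_F x^{-(τ-1)} for large x with τ > 3, let W have law F and W_n have the empirical law F_n of the weights w_j = [1-F]^{-1}(j/n), and let ν = E[W²]/E[W], ν_n = E[W_n²]/E[W_n], and ν̃_n = (1+ε_n)ν_n. Then there is a constant c > 0 such that |ν̃_n - ν| ≤ c(|ε_n| + n^{-(τ-3)/(τ-1)}). -/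
open MeasureTheory Set Filter

private lemma riemann_aux (G : ℝ → ℝ) (hanti : AntitoneOn G (Set.Ioo 0 1))
    (hnn : ∀ u ∈ Set.Ioo (0:ℝ) 1, 0 ≤ G u) (h1 : G 1 = 0)
    (hint : MeasureTheory.IntegrableOn G (Set.Ioo 0 1)) (n : ℕ) (hn : 2 ≤ n) :
    (∫ u in Set.Ioo (0:ℝ) 1, G u) - (∫ u in Set.Ioo (0:ℝ) (1/(n:ℝ)), G u)
        ≤ (1/(n:ℝ)) * ∑ j ∈ Finset.Ico 1 n, G ((j:ℝ)/(n:ℝ))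
    ∧ (1/(n:ℝ)) * ∑ j ∈ Finset.Ico 1 n, G ((j:ℝ)/(n:ℝ)) ≤ ∫ u in Set.Ioo (0:ℝ) 1, G u := by
  have hn2 : (2:ℝ) ≤ n := by exact_mod_cast hn
  have hn0 : (0:ℝ) < n := by linarith
  have hIoc : ∀ a b : ℝ, 0 ≤ a → b ≤ 1 → IntegrableOn G (Set.Ioc a b) := by
    intro a b ha hb
    refine (hint.mono_set ?_).congr_set_ae Ioo_ae_eq_Ioc.symm
    exact fun x hx => ⟨lt_of_le_of_lt ha hx.1, lt_of_lt_of_le hx.2 hb⟩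
  have hii : ∀ a b : ℝ, 0 ≤ a → a ≤ b → b ≤ 1 → IntervalIntegrable G volume a b := by
    intro a b ha hab hb
    exact (intervalIntegrable_iff_integrableOn_Ioc_of_le hab).2 (hIoc a b ha hb)
  have hnnae : 0 ≤ᵐ[volume.restrict (Set.Ioo (0:ℝ) 1)] G :=
    (ae_restrict_iff' measurableSet_Ioo).2 (ae_of_all _ hnn)
  have hreidx : ∀ f : ℕ → ℝ, ∑ j ∈ Finset.Ico 1 n, f j = ∑ k ∈ Finset.range (n-1), f (k+1) := by
    intro f
    rw [Finset.sum_Ico_eq_sum_range]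
    exact Finset.sum_congr rfl fun k _ => by rw [Nat.add_comm]
  have hdivle : ∀ k m : ℕ, k ≤ m → ((k:ℕ):ℝ)/n ≤ ((m:ℕ):ℝ)/n := by
    intro k m hkm
    have : ((k:ℕ):ℝ) ≤ ((m:ℕ):ℝ) := by exact_mod_cast hkm
    exact div_le_div_of_nonneg_right this hn0.le
  have hcast : ∀ k : ℕ, k ≤ n → ((k : ℕ):ℝ)/n ≤ 1 := by
    intro k hk
    rw [div_le_one hn0]
    exact_mod_cast hk
  have hcastlt : ∀ k : ℕ, k < n → ((k : ℕ):ℝ)/n < 1 := by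
    intro k hk
    rw [div_lt_one hn0]
    exact_mod_cast hk
  have hmem : ∀ k : ℕ, 1 ≤ k → k < n → ((k:ℕ):ℝ)/n ∈ Set.Ioo (0:ℝ) 1 := by
    intro k h1k h2k
    constructor
    · have : (0:ℝ) < (k:ℝ) := by exact_mod_cast h1k
      positivity
    · exact hcastlt k h2k
  constructor
  · -- lower bound
    have adj := intervalIntegral.sum_integral_adjacent_intervals
        (a := fun k : ℕ => ((k+1 : ℕ):ℝ)/n) (μ := volume) (f := G) (n := n - 1)
        (fun k hk => hii _ _ (by positivity) (hdivle (k+1) (k+1+1) (by omega))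
          (hcast (k+1+1) (by omega)))
    have term_lo : ∀ k ∈ Finset.range (n-1),
        (∫ u in (((k+1 : ℕ):ℝ)/n)..(((k+1+1 : ℕ):ℝ)/n), G u) ≤ G (((k+1 : ℕ):ℝ)/n) * (1/(n:ℝ)) := by
      intro k hk
      have hk' : k < n - 1 := Finset.mem_range.1 hk
      have hle : (((k+1 : ℕ):ℝ))/n ≤ (((k+1+1 : ℕ):ℝ))/n := hdivle _ _ (by omega)
      rw [intervalIntegral.integral_of_le hle]
      have hΔ : ((k+1+1:ℕ):ℝ)/n - ((k+1:ℕ):ℝ)/n = 1/(n:ℝ) := by push_cast; ring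
      have hconst : ∫ _ in Set.Ioc (((k+1 : ℕ):ℝ)/n) (((k+1+1 : ℕ):ℝ)/n), G (((k+1 : ℕ):ℝ)/n)
          = G (((k+1 : ℕ):ℝ)/n) * (1/(n:ℝ)) := by
        rw [setIntegral_const, measureReal_def, Real.volume_Ioc, hΔ, ENNReal.toReal_ofReal (by positivity),
          smul_eq_mul, mul_comm]
      rw [← hconst]
      refine setIntegral_mono_on (hIoc _ _ (by positivity) (hcast (k+1+1) (by omega)))
        (integrableOn_const measure_Ioc_lt_top.ne) measurableSet_Ioc ?_
      intro u hu
      have hmem1 : ((k+1 : ℕ):ℝ)/n ∈ Set.Ioo (0:ℝ) 1 := hmem (k+1) (by omega) (by omega)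
      have hu1 : u ≤ 1 := le_trans hu.2 (hcast (k+1+1) (by omega))
      rcases lt_or_eq_of_le hu1 with h | h
      · exact hanti hmem1 ⟨lt_trans hmem1.1 hu.1, h⟩ hu.1.le
      · rw [h, h1]; exact hnn _ hmem1
    have hsum_le : ∑ k ∈ Finset.range (n-1), ∫ u in (((k+1 : ℕ):ℝ)/n)..(((k+1+1 : ℕ):ℝ)/n), G u
        ≤ ∑ k ∈ Finset.range (n-1), G (((k+1 : ℕ):ℝ)/n) * (1/(n:ℝ)) :=
      Finset.sum_le_sum term_lo
    have hend0 : ((0+1 : ℕ):ℝ)/n = 1/(n:ℝ) := by norm_num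
    have hendn : ((n-1+1 : ℕ):ℝ)/n = 1 := by
      rw [Nat.sub_add_cancel (by omega)]
      exact div_self hn0.ne'
    beta_reduce at adj
    rw [hend0, hendn] at adj
    have hadd := intervalIntegral.integral_add_adjacent_intervals
      (hii 0 (1/n) le_rfl (by positivity) (by rw [div_le_one hn0]; linarith))
      (hii (1/n) 1 (by positivity) (by rw [div_le_one hn0]; linarith) le_rfl)
    have c1 : ∫ u in (0:ℝ)..(1/(n:ℝ)), G u = ∫ u in Set.Ioo (0:ℝ) (1/(n:ℝ)), G u := by
      rw [intervalIntegral.integral_of_le (by positivity), integral_Ioc_eq_integral_Ioo]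
    have c2 : ∫ u in (0:ℝ)..(1:ℝ), G u = ∫ u in Set.Ioo (0:ℝ) 1, G u := by
      rw [intervalIntegral.integral_of_le (by norm_num), integral_Ioc_eq_integral_Ioo]
    have hsum_eq : (1/(n:ℝ)) * ∑ j ∈ Finset.Ico 1 n, G ((j:ℝ)/(n:ℝ))
        = ∑ k ∈ Finset.range (n-1), G (((k+1 : ℕ):ℝ)/n) * (1/(n:ℝ)) := by
      rw [hreidx (fun j => G ((j:ℝ)/(n:ℝ))), Finset.mul_sum]
      exact Finset.sum_congr rfl fun k _ => by ring
    rw [hsum_eq]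
    calc (∫ u in Set.Ioo (0:ℝ) 1, G u) - (∫ u in Set.Ioo (0:ℝ) (1/(n:ℝ)), G u)
        = ∫ u in (1/(n:ℝ))..(1:ℝ), G u := by rw [← c1, ← c2, ← hadd]; ring
      _ = ∑ k ∈ Finset.range (n-1), ∫ u in (((k+1 : ℕ):ℝ)/n)..(((k+1+1 : ℕ):ℝ)/n), G u := adj.symm
      _ ≤ _ := hsum_le
  · -- upper bound
    have adj := intervalIntegral.sum_integral_adjacent_intervals
        (a := fun k : ℕ => ((k : ℕ):ℝ)/n) (μ := volume) (f := G) (n := n - 1)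
        (fun k hk => hii _ _ (by positivity) (hdivle k (k+1) (by omega))
          (hcast (k+1) (by omega)))
    have term_up : ∀ k ∈ Finset.range (n-1),
        G (((k+1 : ℕ):ℝ)/n) * (1/(n:ℝ)) ≤ ∫ u in (((k : ℕ):ℝ)/n)..(((k+1 : ℕ):ℝ)/n), G u := by
      intro k hk
      have hk' : k < n - 1 := Finset.mem_range.1 hk
      have hle : (((k : ℕ):ℝ))/n ≤ (((k+1 : ℕ):ℝ))/n := hdivle _ _ (by omega)
      rw [intervalIntegral.integral_of_le hle]
      have hΔ : ((k+1:ℕ):ℝ)/n - ((k:ℕ):ℝ)/n = 1/(n:ℝ) := by push_cast; ring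
      have hconst : ∫ _ in Set.Ioc (((k : ℕ):ℝ)/n) (((k+1 : ℕ):ℝ)/n), G (((k+1 : ℕ):ℝ)/n)
          = G (((k+1 : ℕ):ℝ)/n) * (1/(n:ℝ)) := by
        rw [setIntegral_const, measureReal_def, Real.volume_Ioc, hΔ, ENNReal.toReal_ofReal (by positivity),
          smul_eq_mul, mul_comm]
      rw [← hconst]
      refine setIntegral_mono_on (integrableOn_const measure_Ioc_lt_top.ne)
        (hIoc _ _ (by positivity) (hcast (k+1) (by omega))) measurableSet_Ioc ?_
      intro u hu
      have hmem1 : ((k+1 : ℕ):ℝ)/n ∈ Set.Ioo (0:ℝ) 1 := hmem (k+1) (by omega) (by omega)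
      have humem : u ∈ Set.Ioo (0:ℝ) 1 := by
        constructor
        · exact lt_of_le_of_lt (by positivity) hu.1
        · exact lt_of_le_of_lt hu.2 hmem1.2
      exact hanti humem hmem1 hu.2
    have hsum_ge : ∑ k ∈ Finset.range (n-1), G (((k+1 : ℕ):ℝ)/n) * (1/(n:ℝ))
        ≤ ∑ k ∈ Finset.range (n-1), ∫ u in (((k : ℕ):ℝ)/n)..(((k+1 : ℕ):ℝ)/n), G u :=
      Finset.sum_le_sum term_up
    have hend0 : ((0 : ℕ):ℝ)/n = 0 := by norm_num
    beta_reduce at adj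
    rw [hend0] at adj
    have hsum_eq : (1/(n:ℝ)) * ∑ j ∈ Finset.Ico 1 n, G ((j:ℝ)/(n:ℝ))
        = ∑ k ∈ Finset.range (n-1), G (((k+1 : ℕ):ℝ)/n) * (1/(n:ℝ)) := by
      rw [hreidx (fun j => G ((j:ℝ)/(n:ℝ))), Finset.mul_sum]
      exact Finset.sum_congr rfl fun k _ => by ring
    rw [hsum_eq]
    calc ∑ k ∈ Finset.range (n-1), G (((k+1 : ℕ):ℝ)/n) * (1/(n:ℝ))
        ≤ ∑ k ∈ Finset.range (n-1), ∫ u in (((k : ℕ):ℝ)/n)..(((k+1 : ℕ):ℝ)/n), G u := hsum_ge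
      _ = ∫ u in (0:ℝ)..(((n-1 : ℕ):ℝ)/n), G u := adj
      _ = ∫ u in Set.Ioo (0:ℝ) (((n-1 : ℕ):ℝ)/n), G u := by
          rw [intervalIntegral.integral_of_le (by positivity), integral_Ioc_eq_integral_Ioo]
      _ ≤ ∫ u in Set.Ioo (0:ℝ) 1, G u := by
          refine setIntegral_mono_set hint hnnae (HasSubset.Subset.eventuallyLE ?_)
          intro x hx
          exact ⟨hx.1, lt_of_lt_of_le hx.2 (hcast (n-1) (by omega))⟩

set_option maxHeartbeats 1000000 in
/-- with `ν = E[W²]/E[W]`, `ν_n = (Σ w_j²)/(Σ w_j)` for the weights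
`w_j = [1-F]⁻¹(j/n)`, and `ν̃_n = (1+ε_n)ν_n`, a power-law tail bound with
exponent `τ-1`, `τ > 3`, gives `|ν̃_n - ν| ≤ c(|ε_n| + n^{-(τ-3)/(τ-1)})`. -/
theorem stmt_18 (F : ℝ → ℝ) (τ cF : ℝ) (hτ : 3 < τ) (hcF : 0 < cF)
    (hmono : Monotone F)
    (hrc : ∀ x, ContinuousWithinAt F (Set.Ici x) x)
    (hbot : Tendsto F atBot (nhds 0))
    (htop : Tendsto F atTop (nhds 1))
    (hFneg : ∀ x < (0:ℝ), F x = 0)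
    (htail : ∃ x0 : ℝ, ∀ x ≥ x0, 1 - F x ≤ cF * x ^ (-(τ - 1)))
    (μ : Measure ℝ) [IsProbabilityMeasure μ]
    (hcdf : ∀ x, μ (Set.Iic x) = ENNReal.ofReal (F x))
    (hmean : 0 < ∫ w, w ∂μ)
    (w : ℕ → ℕ → ℝ)
    (hw : ∀ n j, 1 ≤ j → j < n → w n j = sInf {s : ℝ | 1 - F s ≤ (j:ℝ)/n})
    (hwn : ∀ n, w n n = 0)
    (ε : ℕ → ℝ) :
    ∃ c : ℝ, 0 < c ∧ ∀ n : ℕ, 1 ≤ n →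
      |(1 + ε n) * ((∑ j ∈ Finset.Icc 1 n, (w n j) ^ 2) /
            (∑ j ∈ Finset.Icc 1 n, w n j))
          - (∫ x, x ^ 2 ∂μ) / (∫ x, x ∂μ)|
        ≤ c * (|ε n| + (n:ℝ) ^ (-(τ - 3)/(τ - 1))) := by
  classical
  have hτ1 : (0:ℝ) < τ - 1 := by linarith
  set β : ℝ := (τ - 1)⁻¹ with hβ
  have hβpos : 0 < β := inv_pos.2 hτ1
  have hβlt : 2 * β < 1 := by
    rw [hβ]
    rw [mul_inv_lt_iff₀' hτ1]
    linarith
  set α : ℝ := (τ - 3)/(τ - 1) with hα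
  have hαpos : 0 < α := div_pos (by linarith) hτ1
  have hα2β : α = 1 - 2*β := by
    rw [hα, hβ]
    field_simp
    ring
  set m1 : ℝ := ∫ x, x ∂μ with hm1def
  set m2 : ℝ := ∫ x, x ^ 2 ∂μ with hm2def
  have hm1pos : 0 < m1 := hmean
  have hm2nn : 0 ≤ m2 := integral_nonneg fun x => sq_nonneg x
  -- basic facts about F
  have F0 : ∀ x, 0 ≤ F x := by
    intro x
    rcases lt_or_ge x 0 with h | h
    · exact (hFneg x h).ge
    · have h2 := hmono (show (-1:ℝ) ≤ x by linarith)
      rw [hFneg (-1) (by norm_num)] at h2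
      exact h2
  have F1 : ∀ x, F x ≤ 1 := by
    intro x
    have h : ENNReal.ofReal (F x) ≤ 1 := (hcdf x) ▸ prob_le_one
    exact ENNReal.ofReal_le_one.1 h
  have hIio : μ (Set.Iio 0) = 0 := by
    have hsub : Set.Iio (0:ℝ) ⊆ ⋃ k : ℕ, Set.Iic (-(1/((k:ℝ)+1))) := by
      intro x hx
      obtain ⟨k, hk⟩ := exists_nat_one_div_lt (show (0:ℝ) < -x by simp only [Set.mem_Iio] at hx; linarith)
      exact Set.mem_iUnion.2 ⟨k, by simp only [Set.mem_Iic]; linarith⟩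
    refine le_antisymm (le_trans (measure_mono hsub) (le_trans (measure_iUnion_le _) ?_)) zero_le
    have hz : ∀ k : ℕ, μ (Set.Iic (-(1/((k:ℝ)+1)))) = 0 := by
      intro k
      rw [hcdf, hFneg _ (neg_lt_zero.2 (by positivity)), ENNReal.ofReal_zero]
    simp only [one_div] at hz
    simp [hz]
  have hae_nn : ∀ᵐ x ∂μ, (0:ℝ) ≤ x := by
    rw [ae_iff]
    convert hIio using 2
    ext x
    simp [not_le]
  have hIoi : ∀ r : ℝ, μ (Set.Ioi r) = ENNReal.ofReal (1 - F r) := by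
    intro r
    rw [← Set.compl_Iic, measure_compl measurableSet_Iic (measure_ne_top μ _), measure_univ, hcdf,
      ENNReal.ofReal_sub _ (F0 r), ENNReal.ofReal_one]
  
  -- quantile function
  set g : ℝ → ℝ := fun u => sInf {s : ℝ | 1 - F s ≤ u} with hgdef
  have hSbdd : ∀ u : ℝ, u < 1 → BddBelow {s : ℝ | 1 - F s ≤ u} := by
    intro u hu
    refine ⟨0, fun s hs => ?_⟩
    by_contra hneg
    push_neg at hneg
    rw [Set.mem_setOf_eq, hFneg s hneg] at hs
    linarith
  have hSne : ∀ u : ℝ, 0 < u → {s : ℝ | 1 - F s ≤ u}.Nonempty := by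
    intro u hu
    obtain ⟨s, hs⟩ := (htop.eventually (eventually_gt_nhds (show 1 - u < 1 by linarith))).exists
    exact ⟨s, by simp only [Set.mem_setOf_eq]; linarith⟩
  have hgnn : ∀ u ∈ Set.Ioo (0:ℝ) 1, 0 ≤ g u := by
    intro u hu
    refine le_csInf (hSne u hu.1) fun s hs => ?_
    by_contra hneg
    push_neg at hneg
    rw [Set.mem_setOf_eq, hFneg s hneg] at hs
    linarith [hu.2]
  have hgmem : ∀ u ∈ Set.Ioo (0:ℝ) 1, 1 - F (g u) ≤ u := by
    intro u hu
    have hup : ∀ s, g u < s → 1 - F s ≤ u := by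
      intro s hs
      obtain ⟨s', hs', hlt⟩ := exists_lt_of_csInf_lt (hSne u hu.1) hs
      have hm := hmono hlt.le
      have : (1:ℝ) - F s ≤ 1 - F s' := by linarith
      exact le_trans this hs'
    have htd : Tendsto F (nhdsWithin (g u) (Set.Ioi (g u))) (nhds (F (g u))) :=
      (hrc (g u)).mono_left (nhdsWithin_mono _ Set.Ioi_subset_Ici_self)
    have hev : ∀ᶠ s in nhdsWithin (g u) (Set.Ioi (g u)), 1 - u ≤ F s :=
      eventually_nhdsWithin_of_forall (fun s hs => by have := hup s hs; linarith)
    have hge := ge_of_tendsto htd hev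
    linarith
  have hgalois : ∀ u ∈ Set.Ioo (0:ℝ) 1, ∀ x : ℝ, (g u ≤ x ↔ 1 - F x ≤ u) := by
    intro u hu x
    constructor
    · intro hx
      have hm := hmono hx
      have : (1:ℝ) - F x ≤ 1 - F (g u) := by linarith
      exact le_trans this (hgmem u hu)
    · intro hx
      exact csInf_le (hSbdd u hu.2) hx
  have hglt : ∀ u ∈ Set.Ioo (0:ℝ) 1, ∀ x : ℝ, (x < g u ↔ u < 1 - F x) := by
    intro u hu x
    have h := hgalois u hu x
    constructor
    · intro hlt
      by_contra hc
      push_neg at hc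
      exact absurd (h.2 hc) (not_le.2 hlt)
    · intro hlt
      by_contra hc
      push_neg at hc
      exact absurd (h.1 hc) (not_le.2 hlt)
  have hganti : AntitoneOn g (Set.Ioo 0 1) := by
    intro u hu v hv huv
    exact csInf_le_csInf (hSbdd v hv.2) (hSne u hu.1) (fun s hs => le_trans hs huv)
  have hg1 : g 1 = 0 := by
    have huniv : {s : ℝ | 1 - F s ≤ 1} = Set.univ := by
      ext s
      simp only [Set.mem_setOf_eq, Set.mem_univ, iff_true]
      linarith [F0 s]
    show sInf {s : ℝ | 1 - F s ≤ 1} = 0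
    rw [huniv]
    have : ¬ BddBelow (Set.univ : Set ℝ) := not_bddBelow_univ
    rw [csInf_of_not_bddBelow this]
    exact Real.sInf_empty
  -- tail bound for g
  obtain ⟨x0, hx0⟩ := htail
  set x1 : ℝ := max x0 1 with hx1def
  have hx11 : 1 ≤ x1 := le_max_right _ _
  have hx10 : 0 < x1 := by linarith
  set A : ℝ := x1 + cF ^ β with hAdef
  have hcFβ : 0 < cF ^ β := Real.rpow_pos_of_pos hcF β
  have hApos : 0 < A := by positivity
  have hgA : ∀ u ∈ Set.Ioo (0:ℝ) 1, g u ≤ A * u ^ (-β) := by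
    intro u hu
    have hu0 : 0 < u := hu.1
    set X : ℝ := max x1 (cF ^ β * u ^ (-β)) with hXdef
    have huβ : 0 < u ^ (-β) := Real.rpow_pos_of_pos hu0 _
    have hXcF : 0 < cF ^ β * u ^ (-β) := mul_pos hcFβ huβ
    have hXx0 : x0 ≤ X := le_trans (le_max_left x0 1) (le_max_left _ _)
    have htailX := hx0 X hXx0
    have hXpow : X ^ (-(τ-1)) ≤ (cF ^ β * u ^ (-β)) ^ (-(τ-1)) :=
      Real.rpow_le_rpow_of_nonpos hXcF (le_max_right _ _) (by linarith)
    have hcalc : (cF ^ β * u ^ (-β)) ^ (-(τ-1)) = cF⁻¹ * u := by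
      rw [Real.mul_rpow hcFβ.le huβ.le, ← Real.rpow_mul hcF.le, ← Real.rpow_mul hu0.le]
      have h1 : β * -(τ-1) = -1 := by
        rw [hβ]
        field_simp
      have h2 : -β * -(τ-1) = 1 := by
        rw [hβ]
        field_simp
      rw [h1, h2, Real.rpow_neg_one, Real.rpow_one]
    have hFX : 1 - F X ≤ u := by
      have h3 : cF * X ^ (-(τ-1)) ≤ cF * (cF⁻¹ * u) := by
        rw [← hcalc]
        exact mul_le_mul_of_nonneg_left hXpow hcF.le
      have h4 : cF * (cF⁻¹ * u) = u := by
        field_simp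
      linarith
    have hgX : g u ≤ X := (hgalois u hu X).2 hFX
    have hu1 : 1 ≤ u ^ (-β) := Real.one_le_rpow_of_pos_of_le_one_of_nonpos hu0 hu.2.le (by linarith)
    have hXle : X ≤ x1 * u ^ (-β) + cF ^ β * u ^ (-β) := by
      refine max_le ?_ ?_
      · nlinarith
      · nlinarith
    calc g u ≤ X := hgX
      _ ≤ x1 * u ^ (-β) + cF ^ β * u ^ (-β) := hXle
      _ = A * u ^ (-β) := by rw [hAdef]; ring
  
  -- measurability
  have haemg : AEMeasurable g (volume.restrict (Set.Ioo (0:ℝ) 1)) :=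
    aemeasurable_restrict_of_antitoneOn measurableSet_Ioo hganti
  have hGsm : ∀ p : ℕ, AEStronglyMeasurable (fun u => g u ^ p) (volume.restrict (Set.Ioo (0:ℝ) 1)) :=
    fun p => (haemg.pow_const p).aestronglyMeasurable
  have hGnnae : ∀ p : ℕ, 0 ≤ᵐ[volume.restrict (Set.Ioo (0:ℝ) 1)] (fun u => g u ^ p) :=
    fun p => (ae_restrict_iff' measurableSet_Ioo).2 (ae_of_all _ fun u hu => pow_nonneg (hgnn u hu) p)
  -- layer cake bridge
  have hbridge : ∀ p : ℕ, 0 < p →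
      ∫⁻ u in Set.Ioo (0:ℝ) 1, ENNReal.ofReal (g u ^ p) = ∫⁻ x, ENNReal.ofReal (x ^ p) ∂μ := by
    intro p hp
    have hL := lintegral_eq_lintegral_meas_lt (volume.restrict (Set.Ioo (0:ℝ) 1))
      (f := fun u => g u ^ p) (hGnnae p) (haemg.pow_const p)
    have hR := lintegral_eq_lintegral_meas_lt μ (f := fun x => x ^ p)
      (hae_nn.mono fun x hx => pow_nonneg hx p) ((measurable_id.pow_const p).aemeasurable)
    rw [hL, hR]
    refine setLIntegral_congr_fun measurableSet_Ioi (fun t ht => ?_)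
    have ht0 : (0:ℝ) < t := ht
    set r : ℝ := t ^ ((p:ℝ))⁻¹ with hrdef
    have hr0 : 0 < r := Real.rpow_pos_of_pos ht0 _
    have hiff : ∀ x : ℝ, 0 ≤ x → (t < x ^ p ↔ r < x) := by
      intro x hx
      rw [← Real.rpow_natCast x p]
      exact Iff.symm (Real.rpow_inv_lt_iff_of_pos ht0.le hx (by exact_mod_cast hp))
    have hset : {u : ℝ | t < g u ^ p} ∩ Set.Ioo 0 1 = Set.Ioo 0 (1 - F r) := by
      ext u
      simp only [Set.mem_inter_iff, Set.mem_setOf_eq, Set.mem_Ioo]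
      constructor
      · rintro ⟨htu, hu0, hu1⟩
        have hri := (hiff (g u) (hgnn u ⟨hu0, hu1⟩)).1 htu
        exact ⟨hu0, (hglt u ⟨hu0, hu1⟩ r).1 hri⟩
      · rintro ⟨hu0, hur⟩
        have hu1 : u < 1 := lt_of_lt_of_le hur (by linarith [F0 r])
        have hrg : r < g u := (hglt u ⟨hu0, hu1⟩ r).2 hur
        exact ⟨(hiff (g u) (hgnn u ⟨hu0, hu1⟩)).2 hrg, hu0, hu1⟩
    have hLside : (volume.restrict (Set.Ioo (0:ℝ) 1)) {u : ℝ | t < g u ^ p}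
        = ENNReal.ofReal (1 - F r) := by
      rw [Measure.restrict_apply' measurableSet_Ioo, hset, Real.volume_Ioo, sub_zero]
    have hRside : μ {x : ℝ | t < x ^ p} = ENNReal.ofReal (1 - F r) := by
      rw [← hIoi r]
      refine measure_congr ?_
      rw [Filter.eventuallyEq_set]
      filter_upwards [hae_nn] with x hx
      simp only [Set.mem_setOf_eq, Set.mem_Ioi]
      exact hiff x hx
    rw [hLside, hRside]
  -- real integral identification
  have hJ : ∀ p : ℕ, 0 < p → ∫ u in Set.Ioo (0:ℝ) 1, g u ^ p = ∫ x, x ^ p ∂μ := by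
    intro p hp
    rw [integral_eq_lintegral_of_nonneg_ae (hGnnae p) (hGsm p),
      integral_eq_lintegral_of_nonneg_ae (hae_nn.mono fun x hx => pow_nonneg hx p)
        ((measurable_id.pow_const p).aemeasurable.aestronglyMeasurable),
      hbridge p hp]
  
  -- pointwise domination of g^p
  have hptw : ∀ p : ℕ, ∀ u ∈ Set.Ioo (0:ℝ) 1, g u ^ p ≤ A ^ p * u ^ (-((p:ℝ)*β)) := by
    intro p u hu
    have h0 : 0 ≤ g u := hgnn u hu
    have hexp : ((u ^ (-β) : ℝ)) ^ p = u ^ (-((p:ℝ) * β)) := by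
      rw [← Real.rpow_natCast (u ^ (-β)) p, ← Real.rpow_mul hu.1.le]
      rw [show -β * (p:ℝ) = -((p:ℝ)*β) by ring]
    calc g u ^ p ≤ (A * u ^ (-β)) ^ p := pow_le_pow_left₀ h0 (hgA u hu) p
      _ = A ^ p * u ^ (-((p:ℝ)*β)) := by rw [mul_pow, hexp]
  have hrint : ∀ p : ℕ, (p:ℝ)*β < 1 → ∀ b : ℝ, b ≤ 1 →
      IntegrableOn (fun u : ℝ => A ^ p * u ^ (-((p:ℝ)*β))) (Set.Ioo 0 b) := by
    intro p hpβ b hb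
    have h1 : IntervalIntegrable (fun u : ℝ => u ^ (-((p:ℝ)*β))) volume 0 1 :=
      intervalIntegral.intervalIntegrable_rpow' (by linarith)
    have h2 := (intervalIntegrable_iff_integrableOn_Ioc_of_le (by norm_num : (0:ℝ) ≤ 1)).1 h1
    refine ((h2.mono_set ?_).const_mul _)
    intro x hx
    exact ⟨hx.1, le_trans hx.2.le hb⟩
  have hdom : ∀ p : ℕ, 0 < p → (p:ℝ)*β < 1 → IntegrableOn (fun u => g u ^ p) (Set.Ioo (0:ℝ) 1) := by
    intro p hp hpβ
    refine Integrable.mono' (hrint p hpβ 1 le_rfl) (hGsm p) ?_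
    refine (ae_restrict_iff' measurableSet_Ioo).2 (ae_of_all _ fun u hu => ?_)
    rw [Real.norm_eq_abs, abs_of_nonneg (pow_nonneg (hgnn u hu) p)]
    exact hptw p u hu
  -- small interval bound
  have hsmall : ∀ p : ℕ, 0 < p → (p:ℝ)*β < 1 → ∀ n : ℕ, 2 ≤ n →
      ∫ u in Set.Ioo (0:ℝ) (1/(n:ℝ)), g u ^ p
        ≤ (A ^ p * (1 - (p:ℝ)*β)⁻¹) * (n:ℝ) ^ (-(1 - (p:ℝ)*β)) := by
    intro p hp hpβ n hn
    have hn2 : (2:ℝ) ≤ n := by exact_mod_cast hn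
    have hn0 : (0:ℝ) < n := by linarith
    have h1n1 : (1:ℝ)/n ≤ 1 := by rw [div_le_one hn0]; linarith
    have hss : Set.Ioo (0:ℝ) (1/(n:ℝ)) ⊆ Set.Ioo (0:ℝ) 1 :=
      fun x hx => ⟨hx.1, lt_of_lt_of_le hx.2 h1n1⟩
    have hint1 : IntegrableOn (fun u => g u ^ p) (Set.Ioo (0:ℝ) (1/(n:ℝ))) :=
      (hdom p hp hpβ).mono_set hss
    have hmono' : ∫ u in Set.Ioo (0:ℝ) (1/(n:ℝ)), g u ^ p
        ≤ ∫ u in Set.Ioo (0:ℝ) (1/(n:ℝ)), A ^ p * u ^ (-((p:ℝ)*β)) := by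
      refine setIntegral_mono_on hint1 (hrint p hpβ _ h1n1) measurableSet_Ioo ?_
      intro u hu
      exact hptw p u (hss hu)
    have hval : ∫ u in Set.Ioo (0:ℝ) (1/(n:ℝ)), A ^ p * u ^ (-((p:ℝ)*β))
        = A ^ p * ((1/(n:ℝ)) ^ (1 - (p:ℝ)*β) / (1 - (p:ℝ)*β)) := by
      rw [integral_const_mul]
      congr 1
      rw [← integral_Ioc_eq_integral_Ioo,
        ← intervalIntegral.integral_of_le (by positivity : (0:ℝ) ≤ 1/(n:ℝ))]
      rw [integral_rpow (Or.inl (by linarith))]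
      rw [Real.zero_rpow (by intro h; linarith)]
      rw [show -((p:ℝ)*β) + 1 = 1 - (p:ℝ)*β by ring]
      ring
    have hcast : ((1:ℝ)/n) ^ (1 - (p:ℝ)*β) = (n:ℝ) ^ (-(1 - (p:ℝ)*β)) := by
      rw [one_div, Real.inv_rpow hn0.le, ← Real.rpow_neg hn0.le]
    calc ∫ u in Set.Ioo (0:ℝ) (1/(n:ℝ)), g u ^ p
        ≤ ∫ u in Set.Ioo (0:ℝ) (1/(n:ℝ)), A ^ p * u ^ (-((p:ℝ)*β)) := hmono'
      _ = A ^ p * ((1/(n:ℝ)) ^ (1 - (p:ℝ)*β) / (1 - (p:ℝ)*β)) := hval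
      _ = (A ^ p * (1 - (p:ℝ)*β)⁻¹) * (n:ℝ) ^ (-(1 - (p:ℝ)*β)) := by
          rw [hcast]; ring
  
  -- key two-sided estimate, parametric in p
  have hkeyp : ∀ p : ℕ, 0 < p → (p:ℝ)*β ≤ 2*β → ∀ n : ℕ, 2 ≤ n →
      (∫ x, x ^ p ∂μ) - (A ^ p * (1 - (p:ℝ)*β)⁻¹) * (n:ℝ) ^ (-α)
          ≤ (1/(n:ℝ)) * ∑ j ∈ Finset.Ico 1 n, g ((j:ℝ)/(n:ℝ)) ^ p
      ∧ (1/(n:ℝ)) * ∑ j ∈ Finset.Ico 1 n, g ((j:ℝ)/(n:ℝ)) ^ p ≤ ∫ x, x ^ p ∂μ := by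
    intro p hp hpβ n hn
    have hpβ' : (p:ℝ)*β < 1 := lt_of_le_of_lt hpβ hβlt
    have hn2 : (2:ℝ) ≤ n := by exact_mod_cast hn
    have hn0 : (0:ℝ) < n := by linarith
    have hn1 : (1:ℝ) ≤ n := by linarith
    have hR := riemann_aux (fun u => g u ^ p)
      (fun u hu v hv huv => pow_le_pow_left₀ (hgnn v hv) (hganti hu hv huv) p)
      (fun u hu => pow_nonneg (hgnn u hu) p)
      (by show g 1 ^ p = 0; rw [hg1]; exact zero_pow hp.ne')
      (hdom p hp hpβ') n hn
    obtain ⟨hlo, hup⟩ := hR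
    have hJp := hJ p hp
    have hsm := hsmall p hp hpβ' n hn
    have hexple : (n:ℝ) ^ (-(1 - (p:ℝ)*β)) ≤ (n:ℝ) ^ (-α) := by
      refine Real.rpow_le_rpow_of_exponent_le hn1 ?_
      rw [hα2β]
      nlinarith [hβpos]
    have hcoef : (0:ℝ) ≤ A ^ p * (1 - (p:ℝ)*β)⁻¹ := mul_nonneg (pow_nonneg hApos.le p) (inv_nonneg.2 (by linarith))
    have hsm2 : ∫ u in Set.Ioo (0:ℝ) (1/(n:ℝ)), g u ^ p
        ≤ (A ^ p * (1 - (p:ℝ)*β)⁻¹) * (n:ℝ) ^ (-α) :=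
      le_trans hsm (mul_le_mul_of_nonneg_left hexple hcoef)
    constructor
    · calc (∫ x, x ^ p ∂μ) - (A ^ p * (1 - (p:ℝ)*β)⁻¹) * (n:ℝ) ^ (-α)
          ≤ (∫ u in Set.Ioo (0:ℝ) 1, g u ^ p) - ∫ u in Set.Ioo (0:ℝ) (1/(n:ℝ)), g u ^ p := by
            rw [hJp]; linarith
        _ ≤ _ := hlo
    · exact le_trans hup (le_of_eq hJp)
  -- sum conversions
  have hconv1 : ∀ n : ℕ, 1 ≤ n →
      ∑ j ∈ Finset.Icc 1 n, w n j = ∑ j ∈ Finset.Ico 1 n, g ((j:ℝ)/(n:ℝ)) := by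
    intro n hn
    rw [← Finset.Ico_add_one_right_eq_Icc, Finset.sum_Ico_succ_top hn, hwn n, add_zero]
    refine Finset.sum_congr rfl fun j hj => ?_
    obtain ⟨hj1, hj2⟩ := Finset.mem_Ico.1 hj
    exact hw n j hj1 hj2
  have hconv2 : ∀ n : ℕ, 1 ≤ n →
      ∑ j ∈ Finset.Icc 1 n, (w n j) ^ 2 = ∑ j ∈ Finset.Ico 1 n, g ((j:ℝ)/(n:ℝ)) ^ 2 := by
    intro n hn
    rw [← Finset.Ico_add_one_right_eq_Icc, Finset.sum_Ico_succ_top hn, hwn n]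
    norm_num
    refine Finset.sum_congr rfl fun j hj => ?_
    obtain ⟨hj1, hj2⟩ := Finset.mem_Ico.1 hj
    rw [hw n j hj1 hj2]
  -- specialized estimates
  set D : ℝ := max (A * (1 - β)⁻¹) (A^2 * (1 - 2*β)⁻¹) with hDdef
  have hD1 : A * (1 - β)⁻¹ ≤ D := le_max_left _ _
  have hD2 : A^2 * (1 - 2*β)⁻¹ ≤ D := le_max_right _ _
  have hDnn : 0 ≤ D := le_trans (mul_nonneg hApos.le (inv_nonneg.2 (by nlinarith [hβpos]))) hD1
  have hkey1 : ∀ n : ℕ, 2 ≤ n →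
      m1 - D * (n:ℝ) ^ (-α) ≤ (1/(n:ℝ)) * ∑ j ∈ Finset.Icc 1 n, w n j
      ∧ (1/(n:ℝ)) * ∑ j ∈ Finset.Icc 1 n, w n j ≤ m1 := by
    intro n hn
    have hn0 : (0:ℝ) < n := by
      have : (2:ℝ) ≤ n := by exact_mod_cast hn
      linarith
    obtain ⟨hlo, hup⟩ := hkeyp 1 one_pos (by push_cast; nlinarith [hβpos]) n hn
    simp only [pow_one, Nat.cast_one, one_mul] at hlo hup
    rw [← hconv1 n (by omega)] at hlo hup
    rw [← hm1def] at hlo hup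
    have hRnn : (0:ℝ) ≤ (n:ℝ) ^ (-α) := Real.rpow_nonneg hn0.le _
    have : D * (n:ℝ) ^ (-α) ≥ (A * (1 - β)⁻¹) * (n:ℝ) ^ (-α) :=
      mul_le_mul_of_nonneg_right hD1 hRnn
    exact ⟨by linarith, hup⟩
  have hkey2 : ∀ n : ℕ, 2 ≤ n →
      m2 - D * (n:ℝ) ^ (-α) ≤ (1/(n:ℝ)) * ∑ j ∈ Finset.Icc 1 n, (w n j) ^ 2
      ∧ (1/(n:ℝ)) * ∑ j ∈ Finset.Icc 1 n, (w n j) ^ 2 ≤ m2 := by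
    intro n hn
    have hn0 : (0:ℝ) < n := by
      have : (2:ℝ) ≤ n := by exact_mod_cast hn
      linarith
    obtain ⟨hlo, hup⟩ := hkeyp 2 two_pos (by push_cast; nlinarith [hβpos]) n hn
    simp only [Nat.cast_ofNat] at hlo hup
    rw [← hconv2 n (by omega)] at hlo hup
    rw [← hm2def] at hlo hup
    have hRnn : (0:ℝ) ≤ (n:ℝ) ^ (-α) := Real.rpow_nonneg hn0.le _
    have : D * (n:ℝ) ^ (-α) ≥ (A^2 * (1 - 2*β)⁻¹) * (n:ℝ) ^ (-α) :=
      mul_le_mul_of_nonneg_right hD2 hRnn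
    exact ⟨by linarith, hup⟩
  
  -- choose N
  have htend : Tendsto (fun n : ℕ => D * (n:ℝ) ^ (-α)) atTop (nhds 0) := by
    have h1 : Tendsto (fun x : ℝ => x ^ (-α)) atTop (nhds 0) := tendsto_rpow_neg_atTop hαpos
    have h2 : Tendsto (fun n : ℕ => ((n:ℝ)) ^ (-α)) atTop (nhds 0) :=
      h1.comp tendsto_natCast_atTop_atTop
    have h3 := h2.const_mul D
    simpa using h3
  obtain ⟨N0, hN0⟩ := Filter.eventually_atTop.1
    (htend.eventually (eventually_lt_nhds (by linarith : (0:ℝ) < m1/2)))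
  set M : ℕ := max N0 2 with hMdef
  have hM2 : 2 ≤ M := le_max_right _ _
  have hM0 : (0:ℝ) < M := by
    have h : (2:ℝ) ≤ (M:ℝ) := by exact_mod_cast hM2
    linarith
  set K : ℝ := ∑ k ∈ Finset.range M,
    |(∑ j ∈ Finset.Icc 1 k, (w k j) ^ 2) / (∑ j ∈ Finset.Icc 1 k, w k j)| with hKdef
  have hKnn : 0 ≤ K := Finset.sum_nonneg fun _ _ => abs_nonneg _
  set ν : ℝ := m2 / m1 with hνdef
  set B : ℝ := 2*m2/m1 with hBdef
  have hBnn : 0 ≤ B := by positivity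
  set C1 : ℝ := ((m1+m2)*D)/((m1/2)*m1) with hC1def
  have hC1nn : 0 ≤ C1 := by positivity
  set c : ℝ := 1 + max (max B C1) (max K ((K + |ν|) * (M:ℝ) ^ α)) with hcdef2
  have hcB : B ≤ c := by
    have h := le_trans (le_max_left B C1) (le_max_left (max B C1) (max K ((K + |ν|) * (M:ℝ) ^ α)))
    linarith
  have hcC1 : C1 ≤ c := by
    have h := le_trans (le_max_right B C1) (le_max_left (max B C1) (max K ((K + |ν|) * (M:ℝ) ^ α)))
    linarith
  have hcK : K ≤ c := by
    have h := le_trans (le_max_left K ((K + |ν|) * (M:ℝ) ^ α)) (le_max_right (max B C1) _)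
    linarith
  have hcKν : (K + |ν|) * (M:ℝ) ^ α ≤ c := by
    have h := le_trans (le_max_right K ((K + |ν|) * (M:ℝ) ^ α)) (le_max_right (max B C1) _)
    linarith
  have hcpos : 0 < c := by
    have h0 : (0:ℝ) ≤ max (max B C1) (max K ((K + |ν|) * (M:ℝ) ^ α)) :=
      le_trans hKnn (le_trans (le_max_left K _) (le_max_right _ _))
    linarith
  refine ⟨c, hcpos, fun n hn => ?_⟩
  have hn0 : (0:ℝ) < n := by
    have h : (1:ℝ) ≤ n := by exact_mod_cast hn
    linarith
  have hexp : -(τ - 3)/(τ - 1) = -α := by rw [hα]; ring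
  rw [hexp]
  set Rn : ℝ := (n:ℝ) ^ (-α) with hRndef
  have hRn0 : 0 < Rn := Real.rpow_pos_of_pos hn0 _
  have hεnn : 0 ≤ |ε n| := abs_nonneg _
  rcases le_or_gt M n with hMn | hMn
  · -- large n
    have hn2 : 2 ≤ n := le_trans hM2 hMn
    obtain ⟨hlo1, hup1⟩ := hkey1 n hn2
    obtain ⟨hlo2, hup2⟩ := hkey2 n hn2
    have hDR : D * Rn < m1/2 := hN0 n (le_trans (le_max_left N0 2) hMn)
    set b := (1/(n:ℝ)) * ∑ j ∈ Finset.Icc 1 n, w n j with hbdef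
    set a := (1/(n:ℝ)) * ∑ j ∈ Finset.Icc 1 n, (w n j) ^ 2 with hadef
    have hbpos : 0 < b := by linarith
    have hb2 : m1/2 ≤ b := by linarith
    have hann : 0 ≤ a := mul_nonneg (by positivity) (Finset.sum_nonneg fun j _ => sq_nonneg _)
    have hνn : (∑ j ∈ Finset.Icc 1 n, (w n j) ^ 2) / (∑ j ∈ Finset.Icc 1 n, w n j) = a / b := by
      rw [hadef, hbdef, mul_div_mul_left _ _ (by positivity : (1:ℝ)/(n:ℝ) ≠ 0)]
    rw [hνn]
    have hab : a / b ≤ B := by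
      have h1 : a / b ≤ m2 / (m1/2) := div_le_div₀ hm2nn hup2 (by linarith) hb2
      have h2 : m2 / (m1/2) = B := by rw [hBdef]; field_simp
      linarith
    have habnn : 0 ≤ a / b := div_nonneg hann hbpos.le
    have hnum : |a * m1 - b * m2| ≤ (m1 + m2) * (D * Rn) := by
      have e : a * m1 - b * m2 = m1 * (a - m2) + m2 * (m1 - b) := by ring
      rw [e]
      have h1 : |a - m2| ≤ D * Rn := abs_le.2 ⟨by linarith, by linarith⟩
      have h2 : |m1 - b| ≤ D * Rn := abs_le.2 ⟨by linarith, by linarith⟩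
      calc |m1 * (a - m2) + m2 * (m1 - b)| ≤ |m1 * (a - m2)| + |m2 * (m1 - b)| := abs_add_le _ _
        _ = m1 * |a - m2| + m2 * |m1 - b| := by
            rw [abs_mul, abs_mul, abs_of_nonneg hm1pos.le, abs_of_nonneg hm2nn]
        _ ≤ m1 * (D * Rn) + m2 * (D * Rn) := by
            have h3 := mul_le_mul_of_nonneg_left h1 hm1pos.le
            have h4 := mul_le_mul_of_nonneg_left h2 hm2nn
            linarith
        _ = (m1 + m2) * (D * Rn) := by ring
    have hdiff : |a / b - ν| ≤ C1 * Rn := by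
      rw [hνdef, div_sub_div a m2 hbpos.ne' hm1pos.ne', abs_div,
        abs_of_pos (mul_pos hbpos hm1pos)]
      have hden : (m1/2)*m1 ≤ b * m1 := mul_le_mul_of_nonneg_right hb2 hm1pos.le
      calc |a * m1 - b * m2| / (b * m1) ≤ ((m1 + m2) * (D * Rn)) / ((m1/2)*m1) :=
            div_le_div₀ (by positivity) hnum (by positivity) hden
        _ = C1 * Rn := by rw [hC1def]; field_simp
    have e2 : (1 + ε n) * (a/b) - ν = (a/b - ν) + ε n * (a/b) := by ring
    rw [e2]
    calc |(a/b - ν) + ε n * (a/b)| ≤ |a/b - ν| + |ε n * (a/b)| := abs_add_le _ _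
      _ = |a/b - ν| + |ε n| * (a/b) := by rw [abs_mul, abs_of_nonneg habnn]
      _ ≤ C1 * Rn + |ε n| * B := by
          have h5 := mul_le_mul_of_nonneg_left hab hεnn
          linarith
      _ ≤ c * Rn + |ε n| * c := by
          have h6 := mul_le_mul_of_nonneg_right hcC1 hRn0.le
          have h7 := mul_le_mul_of_nonneg_left hcB hεnn
          linarith
      _ = c * (|ε n| + Rn) := by ring
  · -- small n
    have hvK : |(∑ j ∈ Finset.Icc 1 n, (w n j) ^ 2) / (∑ j ∈ Finset.Icc 1 n, w n j)| ≤ K := by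
      rw [hKdef]
      exact Finset.single_le_sum (f := fun k =>
        |(∑ j ∈ Finset.Icc 1 k, (w k j) ^ 2) / (∑ j ∈ Finset.Icc 1 k, w k j)|)
        (fun k _ => abs_nonneg _) (Finset.mem_range.2 hMn)
    set v : ℝ := (∑ j ∈ Finset.Icc 1 n, (w n j) ^ 2) / (∑ j ∈ Finset.Icc 1 n, w n j) with hvdef
    have hRnN : (M:ℝ) ^ (-α) ≤ Rn := by
      rw [hRndef]
      refine Real.rpow_le_rpow_of_nonpos hn0 ?_ (neg_nonpos.2 hαpos.le)
      exact_mod_cast hMn.le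
    have hMα : 1 ≤ (M:ℝ) ^ α * Rn := by
      have hMM : (M:ℝ) ^ α * (M:ℝ) ^ (-α) = 1 := by
        rw [← Real.rpow_add hM0]
        simp
      have h8 := mul_le_mul_of_nonneg_left hRnN (Real.rpow_nonneg hM0.le α)
      linarith
    have e2 : (1 + ε n) * v - ν = (v - ν) + ε n * v := by ring
    rw [e2]
    calc |(v - ν) + ε n * v| ≤ |v - ν| + |ε n * v| := abs_add_le _ _
      _ ≤ (|v| + |ν|) + |ε n| * |v| := by
          rw [abs_mul]
          have h9 : |v - ν| ≤ |v| + |ν| := abs_sub v ν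
          linarith
      _ ≤ (K + |ν|) + |ε n| * K := by
          have h11 := mul_le_mul_of_nonneg_left hvK hεnn
          linarith
      _ ≤ (K + |ν|) * ((M:ℝ) ^ α * Rn) + |ε n| * c := by
          have h12 : (0:ℝ) ≤ K + |ν| := by positivity
          have h13 := mul_le_mul_of_nonneg_left hMα h12
          have h14 := mul_le_mul_of_nonneg_left hcK hεnn
          linarith
      _ ≤ c * Rn + |ε n| * c := by
          have h15 : (K + |ν|) * ((M:ℝ) ^ α * Rn) = ((K + |ν|) * (M:ℝ) ^ α) * Rn := by ring
          rw [h15]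
          have h16 := mul_le_mul_of_nonneg_right hcKν hRn0.le
          linarith
      _ = c * (|ε n| + Rn) := by ring
end
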